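/- arXiv:1809.02799 — 4 statements merged into one kernel-verified Lean document; each statement's English description precedes it below -/
import Mathlib

section
/- Let α ≥ 5 be an integer and let G be a finite simple graph with maximum degree Δ such that every subgraph G' of G satisfies at least one of: (i) G' has a vertex of degree at most 1; (ii) G' contains an edge uv with d_{G'}(u) + d_{G'}(v) ≤ α; (iii) G' contains a 2-alternating cycle. Then the edge set of G can be partitioned into three pairwise disjoint sets inducing spanning subgraphs F₁, F₂, H such that F₁ and F₂ are forests with maximum degree at most max{2, ⌈(Δ − α + 6)/2⌉} and H has maximum degree at most α − 5. -/
/-- A 2-alternating cycle in a subgraph `G'` of `G`: a cycle `v₀v₁⋯v₂ₙ₋₁v₀` of even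
length `2n ≥ 4` (vertices pairwise distinct) all of whose even-indexed vertices have
degree 2 in `G'`. -/
def SubgraphHasTwoAlternatingCycle {V : Type*} {G : SimpleGraph V} (G' : G.Subgraph) : Prop :=
  ∃ (n : ℕ) (f : ℕ → V), 2 ≤ n ∧
    (∀ i < 2 * n, ∀ j < 2 * n, f i = f j → i = j) ∧
    (∀ i < 2 * n, G'.Adj (f i) (f ((i + 1) % (2 * n)))) ∧
    (∀ i < 2 * n, i % 2 = 0 → (G'.neighborSet (f i)).ncard = 2)

/-- `F₁`, `F₂`, `H` form an edge partition of `G` into three spanning subgraphs: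
their edge sets are pairwise disjoint and their union is the edge set of `G`. -/
def EdgePartition3 {V : Type*} (G F₁ F₂ H : SimpleGraph V) : Prop :=
  F₁.edgeSet ∪ F₂.edgeSet ∪ H.edgeSet = G.edgeSet ∧
  Disjoint F₁.edgeSet F₂.edgeSet ∧
  Disjoint F₁.edgeSet H.edgeSet ∧
  Disjoint F₂.edgeSet H.edgeSet


section EPAux
open SimpleGraph Set
set_option linter.unusedSectionVars false
set_option maxHeartbeats 1000000

namespace EPAux

variable {V : Type*} [Fintype V]

lemma reach_exists_adj {F : SimpleGraph V} {u v : V} (h : F.Reachable u v) (hne : u ≠ v) :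
    ∃ w, F.Adj u w := by
  obtain ⟨p⟩ := h
  cases p with
  | nil => exact absurd rfl hne
  | cons h' _ => exact ⟨_, h'⟩

lemma sup_edge_isAcyclic {F : SimpleGraph V} (hF : F.IsAcyclic) {u v : V} (hne : u ≠ v)
    (hr : ¬ F.Reachable u v) : (F ⊔ edge u v).IsAcyclic := by
  intro x c hc
  by_cases he : s(u, v) ∈ c.edges
  · have h2 := (adj_and_reachable_delete_edges_iff_exists_cycle (G := F ⊔ edge u v)).mpr
      ⟨x, c, hc, he⟩
    refine hr (h2.2.mono ?_)
    intro a b hab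
    rcases hab with ⟨hab1 | hab1, hab2⟩
    · exact hab1
    · exfalso
      rw [edge_adj] at hab1
      apply hab2
      simp only [fromEdgeSet_adj, Set.mem_singleton_iff]
      rcases hab1.1 with ⟨rfl, rfl⟩ | ⟨rfl, rfl⟩
      · exact ⟨rfl, hab1.2⟩
      · exact ⟨Sym2.eq_swap, hab1.2⟩
  · have hsub : ∀ e ∈ c.edges, e ∈ F.edgeSet := by
      intro e hee
      have := c.edges_subset_edgeSet hee
      rw [edgeSet_sup] at this
      rcases this with h' | h'
      · exact h'
      · exfalso
        rw [edge, edgeSet_fromEdgeSet] at h'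
        obtain ⟨h1', _⟩ := h'
        simp only [Set.mem_singleton_iff] at h1'
        exact he (h1' ▸ hee)
    exact hF (c.transfer F hsub) (hc.transfer hsub)

lemma nbr_sup (F F' : SimpleGraph V) (x : V) :
    (F ⊔ F').neighborSet x = F.neighborSet x ∪ F'.neighborSet x := rfl

lemma edge_nbr_left {u v : V} (hne : u ≠ v) : (edge u v).neighborSet u = {v} := by
  ext w
  simp only [mem_neighborSet, edge_adj, Set.mem_singleton_iff]
  aesop

lemma edge_nbr_right {u v : V} (hne : u ≠ v) : (edge u v).neighborSet v = {u} := by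
  ext w
  simp only [mem_neighborSet, edge_adj, Set.mem_singleton_iff]
  aesop

lemma edge_nbr_other {u v x : V} (hxu : x ≠ u) (hxv : x ≠ v) :
    (edge u v).neighborSet x = ∅ := by
  ext w
  simp only [mem_neighborSet, edge_adj, Set.mem_empty_iff_false, iff_false]
  aesop

lemma nbr_partition {K F₁ F₂ H : SimpleGraph V}
    (hU : F₁.edgeSet ∪ F₂.edgeSet ∪ H.edgeSet = K.edgeSet)
    (h12 : Disjoint F₁.edgeSet F₂.edgeSet) (h1H : Disjoint F₁.edgeSet H.edgeSet)
    (h2H : Disjoint F₂.edgeSet H.edgeSet) (x : V) :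
    (F₁.neighborSet x).ncard + (F₂.neighborSet x).ncard + (H.neighborSet x).ncard
      = (K.neighborSet x).ncard := by
  have hmem : ∀ (F : SimpleGraph V) (w : V), w ∈ F.neighborSet x ↔ s(x, w) ∈ F.edgeSet := by
    intro F w; rw [mem_edgeSet]; rfl
  have hset : K.neighborSet x = (F₁.neighborSet x ∪ F₂.neighborSet x) ∪ H.neighborSet x := by
    ext w
    simp only [Set.mem_union, hmem, ← hU, Set.mem_union]
  have d12 : Disjoint (F₁.neighborSet x) (F₂.neighborSet x) := by
    rw [Set.disjoint_left]; intro w hw1 hw2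
    exact (Set.disjoint_left.mp h12) ((hmem _ _).mp hw1) ((hmem _ _).mp hw2)
  have d1H : Disjoint (F₁.neighborSet x ∪ F₂.neighborSet x) (H.neighborSet x) := by
    rw [Set.disjoint_left]; rintro w (hw1 | hw1) hw2
    · exact (Set.disjoint_left.mp h1H) ((hmem _ _).mp hw1) ((hmem _ _).mp hw2)
    · exact (Set.disjoint_left.mp h2H) ((hmem _ _).mp hw1) ((hmem _ _).mp hw2)
  rw [hset, Set.ncard_union_eq d1H (Set.toFinite _) (Set.toFinite _),
    Set.ncard_union_eq d12 (Set.toFinite _) (Set.toFinite _)]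

noncomputable def gg (α : ℕ) (d : ℕ) : ℤ := max 2 ⌈((d : ℚ) - α + 6) / 2⌉

lemma two_le_gg (α d : ℕ) : 2 ≤ gg α d := le_max_left _ _

lemma gg_mono (α : ℕ) {d e : ℕ} (h : d ≤ e) : gg α d ≤ gg α e := by
  apply max_le_max le_rfl
  apply Int.ceil_le_ceil
  apply div_le_div_of_nonneg_right ?_ (by norm_num)
  have : (d : ℚ) ≤ e := by exact_mod_cast h
  linarith

lemma two_gg_ge (α d : ℕ) : (d : ℤ) - α + 6 ≤ 2 * gg α d := by
  have h1 : ((d : ℚ) - α + 6) / 2 ≤ (⌈((d : ℚ) - α + 6) / 2⌉ : ℚ) := Int.le_ceil _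
  have h3 : ((d : ℚ) - α + 6) ≤ 2 * (gg α d : ℚ) := by
    have h4 : (⌈((d : ℚ) - α + 6) / 2⌉ : ℤ) ≤ gg α d := le_max_right _ _
    have h5 : (⌈((d : ℚ) - α + 6) / 2⌉ : ℚ) ≤ (gg α d : ℚ) := by exact_mod_cast h4
    linarith
  exact_mod_cast h3

lemma gg_step {α d : ℕ} (hd : α ≤ d + 1) (hα : 5 ≤ α) : gg α (d - 2) + 1 ≤ gg α d := by
  have hd4 : 4 ≤ d := by omega
  have hcast : ((d - 2 : ℕ) : ℚ) = (d : ℚ) - 2 := by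
    have h2 : (2 : ℕ) ≤ d := by omega
    push_cast [Nat.cast_sub h2]; ring
  have hkey : (⌈((d : ℚ) - α + 6) / 2⌉ : ℤ) = ⌈(((d - 2 : ℕ) : ℚ) - α + 6) / 2⌉ + 1 := by
    rw [hcast]
    have : ((d : ℚ) - α + 6) / 2 = ((d : ℚ) - 2 - α + 6) / 2 + 1 := by ring
    rw [this, Int.ceil_add_one]
  have hge3 : (3 : ℤ) ≤ ⌈((d : ℚ) - α + 6) / 2⌉ := by
    apply Int.le_ceil_iff.mpr
    have : (α : ℚ) ≤ (d : ℚ) + 1 := by exact_mod_cast hd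
    push_cast
    linarith
  have hge2 : (2 : ℤ) ≤ ⌈(((d - 2 : ℕ) : ℚ) - α + 6) / 2⌉ := by omega
  unfold gg
  rw [max_eq_right (by omega : (2:ℤ) ≤ ⌈((d : ℚ) - α + 6) / 2⌉), max_eq_right hge2]
  omega

def Decomp (α : ℕ) (K F₁ F₂ H : SimpleGraph V) : Prop :=
  F₁.edgeSet ∪ F₂.edgeSet ∪ H.edgeSet = K.edgeSet ∧
  Disjoint F₁.edgeSet F₂.edgeSet ∧ Disjoint F₁.edgeSet H.edgeSet ∧
  Disjoint F₂.edgeSet H.edgeSet ∧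
  F₁.IsAcyclic ∧ F₂.IsAcyclic ∧
  (∀ v, ((F₁.neighborSet v).ncard : ℤ) ≤ gg α (K.neighborSet v).ncard) ∧
  (∀ v, ((F₂.neighborSet v).ncard : ℤ) ≤ gg α (K.neighborSet v).ncard) ∧
  (∀ v, ((H.neighborSet v).ncard : ℤ) ≤ (α : ℤ) - 5)

lemma edge_edgeSet {u v : V} (hne : u ≠ v) : (edge u v).edgeSet = {s(u, v)} := by
  rw [edge, edgeSet_fromEdgeSet]
  ext e
  simp only [Set.mem_diff, Set.mem_singleton_iff, Set.mem_setOf_eq]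
  constructor
  · exact fun h => h.1
  · rintro rfl
    exact ⟨rfl, by simp [Sym2.isDiag_iff_proj_eq, hne]⟩

lemma delAdj {K : SimpleGraph V} {u v x y : V} :
    (K.deleteEdges {s(u, v)}).Adj x y ↔ K.Adj x y ∧ s(x, y) ≠ s(u, v) := by
  rw [deleteEdges_adj, Set.mem_singleton_iff]

lemma union3_insert_1 {A B C Ke : Set (Sym2 V)} {e : Sym2 V}
    (hU : A ∪ B ∪ C = Ke \ {e}) (he : e ∈ Ke) : (A ∪ {e}) ∪ B ∪ C = Ke := by
  have h := Set.ext_iff.mp hU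
  ext x
  have hx := h x
  simp only [Set.mem_union, Set.mem_singleton_iff, Set.mem_diff] at hx ⊢
  by_cases hxe : x = e
  · subst hxe; tauto
  · tauto

lemma union3_insert_2 {A B C Ke : Set (Sym2 V)} {e : Sym2 V}
    (hU : A ∪ B ∪ C = Ke \ {e}) (he : e ∈ Ke) : A ∪ (B ∪ {e}) ∪ C = Ke := by
  have h := Set.ext_iff.mp hU
  ext x
  have hx := h x
  simp only [Set.mem_union, Set.mem_singleton_iff, Set.mem_diff] at hx ⊢
  by_cases hxe : x = e
  · subst hxe; tauto
  · tauto

lemma union3_insert_3 {A B C Ke : Set (Sym2 V)} {e : Sym2 V}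
    (hU : A ∪ B ∪ C = Ke \ {e}) (he : e ∈ Ke) : A ∪ B ∪ (C ∪ {e}) = Ke := by
  have h := Set.ext_iff.mp hU
  ext x
  have hx := h x
  simp only [Set.mem_union, Set.mem_singleton_iff, Set.mem_diff] at hx ⊢
  by_cases hxe : x = e
  · subst hxe; tauto
  · tauto

lemma insert_one (α : ℕ) (hα : 5 ≤ α) {K : SimpleGraph V} {u v : V} (hadj : K.Adj u v)
    (hcase : (K.neighborSet u).ncard + (K.neighborSet v).ncard ≤ α ∨
      (K.neighborSet v).ncard = 1)
    {F₁ F₂ H : SimpleGraph V} (hD : Decomp α (K.deleteEdges {s(u, v)}) F₁ F₂ H) :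
    ∃ F₁' F₂' H' : SimpleGraph V, Decomp α K F₁' F₂' H' := by
  obtain ⟨hU, h12, h1H, h2H, hA1, hA2, hB1, hB2, hBH⟩ := hD
  set K' := K.deleteEdges {s(u, v)} with hK'def
  have hne : u ≠ v := hadj.ne
  have hKe : s(u, v) ∈ K.edgeSet := hadj
  have hK'e : K'.edgeSet = K.edgeSet \ {s(u, v)} := edgeSet_deleteEdges _
  have hnotin : s(u, v) ∉ K'.edgeSet := by rw [hK'e]; exact fun h => h.2 rfl
  -- neighbor sets of K'
  have nbru' : K'.neighborSet u = K.neighborSet u \ {v} := by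
    ext w
    simp only [mem_neighborSet, hK'def, delAdj, Set.mem_diff, Set.mem_singleton_iff, ne_eq,
      Sym2.congr_right]
  have nbrv' : K'.neighborSet v = K.neighborSet v \ {u} := by
    ext w
    simp only [mem_neighborSet, hK'def, delAdj, Set.mem_diff, Set.mem_singleton_iff, ne_eq]
    constructor
    · rintro ⟨h1, h2⟩
      refine ⟨h1, fun hw => h2 ?_⟩
      subst hw; exact Sym2.eq_swap
    · rintro ⟨h1, h2⟩
      refine ⟨h1, fun hw => h2 ?_⟩
      rcases Sym2.eq_iff.mp hw with ⟨rfl, rfl⟩ | ⟨h3, rfl⟩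
      · rfl
      · rfl
  have nbrx' : ∀ x, x ≠ u → x ≠ v → K'.neighborSet x = K.neighborSet x := by
    intro x hxu hxv
    ext w
    simp only [mem_neighborSet, hK'def, delAdj, ne_eq]
    constructor
    · exact fun h => h.1
    · intro h
      refine ⟨h, fun hw => ?_⟩
      rcases Sym2.eq_iff.mp hw with ⟨rfl, rfl⟩ | ⟨rfl, rfl⟩
      · exact hxu rfl
      · exact hxv rfl
  have hvmem : v ∈ K.neighborSet u := hadj
  have humem : u ∈ K.neighborSet v := hadj.symm
  set du := (K.neighborSet u).ncard with hdu
  set dv := (K.neighborSet v).ncard with hdv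
  have hdu' : (K'.neighborSet u).ncard = du - 1 := by
    rw [nbru']; exact Set.ncard_diff_singleton_of_mem hvmem
  have hdv' : (K'.neighborSet v).ncard = dv - 1 := by
    rw [nbrv']; exact Set.ncard_diff_singleton_of_mem humem
  have hdu1 : 1 ≤ du := (Set.ncard_pos (Set.toFinite _)).mpr ⟨v, hvmem⟩
  have hdv1 : 1 ≤ dv := (Set.ncard_pos (Set.toFinite _)).mpr ⟨u, humem⟩
  -- component subsets
  have hF1le : F₁.edgeSet ⊆ K'.edgeSet := hU ▸ fun e he => Or.inl (Or.inl he)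
  have hF2le : F₂.edgeSet ⊆ K'.edgeSet := hU ▸ fun e he => Or.inl (Or.inr he)
  have hHle : H.edgeSet ⊆ K'.edgeSet := hU ▸ fun e he => Or.inr he
  have hmono : ∀ x, gg α (K'.neighborSet x).ncard ≤ gg α (K.neighborSet x).ncard := by
    intro x
    apply gg_mono
    apply Set.ncard_le_ncard _ (Set.toFinite _)
    intro w hw
    exact (K.deleteEdges_le (s := {s(u,v)})) hw
  -- abbreviations
  set a1 := (F₁.neighborSet u).ncard with ha1
  set a2 := (F₂.neighborSet u).ncard with ha2
  set hu := (H.neighborSet u).ncard with hhu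
  set b1 := (F₁.neighborSet v).ncard with hb1
  set b2 := (F₂.neighborSet v).ncard with hb2
  set hv := (H.neighborSet v).ncard with hhv
  have hpu : a1 + a2 + hu = du - 1 := by
    rw [← hdu']; exact nbr_partition hU h12 h1H h2H u
  have hpv : b1 + b2 + hv = dv - 1 := by
    rw [← hdv']; exact nbr_partition hU h12 h1H h2H v
  -- the union helper
  have hU' : F₁.edgeSet ∪ F₂.edgeSet ∪ H.edgeSet = K.edgeSet \ {s(u, v)} := by
    rw [hU, hK'e]
  by_cases hc1 : ¬ F₁.Reachable u v ∧ (a1 : ℤ) + 1 ≤ gg α du ∧ (b1 : ℤ) + 1 ≤ gg α dv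
  · refine ⟨F₁ ⊔ edge u v, F₂, H, ?_, ?_, ?_, ?_, ?_, hA2, ?_, ?_, hBH⟩
    · rw [edgeSet_sup, edge_edgeSet hne]
      exact union3_insert_1 hU' hKe
    · rw [edgeSet_sup, edge_edgeSet hne, Set.disjoint_union_left]
      exact ⟨h12, Set.disjoint_singleton_left.mpr (fun h => hnotin (hF2le h))⟩
    · rw [edgeSet_sup, edge_edgeSet hne, Set.disjoint_union_left]
      exact ⟨h1H, Set.disjoint_singleton_left.mpr (fun h => hnotin (hHle h))⟩
    · exact h2H
    · exact sup_edge_isAcyclic hA1 hne hc1.1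
    · intro x
      by_cases hxu : x = u
      · subst hxu
        rw [nbr_sup, edge_nbr_left hne, Set.union_singleton]
        calc ((insert v (F₁.neighborSet x)).ncard : ℤ) ≤ (a1 : ℤ) + 1 := by
              exact_mod_cast Set.ncard_insert_le _ _
          _ ≤ gg α du := hc1.2.1
      · by_cases hxv : x = v
        · subst hxv
          rw [nbr_sup, edge_nbr_right hne, Set.union_singleton]
          calc ((insert u (F₁.neighborSet x)).ncard : ℤ) ≤ (b1 : ℤ) + 1 := by
                exact_mod_cast Set.ncard_insert_le _ _
            _ ≤ gg α dv := hc1.2.2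
        · rw [nbr_sup, edge_nbr_other hxu hxv, Set.union_empty]
          exact (hB1 x).trans (hmono x)
    · exact fun x => (hB2 x).trans (hmono x)
  · by_cases hc2 : ¬ F₂.Reachable u v ∧ (a2 : ℤ) + 1 ≤ gg α du ∧ (b2 : ℤ) + 1 ≤ gg α dv
    · refine ⟨F₁, F₂ ⊔ edge u v, H, ?_, ?_, ?_, ?_, hA1, ?_, ?_, ?_, hBH⟩
      · rw [edgeSet_sup, edge_edgeSet hne]
        exact union3_insert_2 hU' hKe
      · rw [edgeSet_sup, edge_edgeSet hne, Set.disjoint_union_right]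
        exact ⟨h12, Set.disjoint_singleton_right.mpr (fun h => hnotin (hF1le h))⟩
      · exact h1H
      · rw [edgeSet_sup, edge_edgeSet hne, Set.disjoint_union_left]
        exact ⟨h2H, Set.disjoint_singleton_left.mpr (fun h => hnotin (hHle h))⟩
      · exact sup_edge_isAcyclic hA2 hne hc2.1
      · exact fun x => (hB1 x).trans (hmono x)
      · intro x
        by_cases hxu : x = u
        · subst hxu
          rw [nbr_sup, edge_nbr_left hne, Set.union_singleton]
          calc ((insert v (F₂.neighborSet x)).ncard : ℤ) ≤ (a2 : ℤ) + 1 := by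
                exact_mod_cast Set.ncard_insert_le _ _
            _ ≤ gg α du := hc2.2.1
        · by_cases hxv : x = v
          · subst hxv
            rw [nbr_sup, edge_nbr_right hne, Set.union_singleton]
            calc ((insert u (F₂.neighborSet x)).ncard : ℤ) ≤ (b2 : ℤ) + 1 := by
                  exact_mod_cast Set.ncard_insert_le _ _
              _ ≤ gg α dv := hc2.2.2
          · rw [nbr_sup, edge_nbr_other hxu hxv, Set.union_empty]
            exact (hB2 x).trans (hmono x)
    · by_cases hcH : (hu : ℤ) + 1 ≤ (α : ℤ) - 5 ∧ (hv : ℤ) + 1 ≤ (α : ℤ) - 5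
      · refine ⟨F₁, F₂, H ⊔ edge u v, ?_, h12, ?_, ?_, hA1, hA2, ?_, ?_, ?_⟩
        · rw [edgeSet_sup, edge_edgeSet hne]
          exact union3_insert_3 hU' hKe
        · rw [edgeSet_sup, edge_edgeSet hne, Set.disjoint_union_right]
          exact ⟨h1H, Set.disjoint_singleton_right.mpr (fun h => hnotin (hF1le h))⟩
        · rw [edgeSet_sup, edge_edgeSet hne, Set.disjoint_union_right]
          exact ⟨h2H, Set.disjoint_singleton_right.mpr (fun h => hnotin (hF2le h))⟩
        · exact fun x => (hB1 x).trans (hmono x)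
        · exact fun x => (hB2 x).trans (hmono x)
        · intro x
          by_cases hxu : x = u
          · subst hxu
            rw [nbr_sup, edge_nbr_left hne, Set.union_singleton]
            calc ((insert v (H.neighborSet x)).ncard : ℤ) ≤ (hu : ℤ) + 1 := by
                  exact_mod_cast Set.ncard_insert_le _ _
              _ ≤ (α : ℤ) - 5 := hcH.1
          · by_cases hxv : x = v
            · subst hxv
              rw [nbr_sup, edge_nbr_right hne, Set.union_singleton]
              calc ((insert u (H.neighborSet x)).ncard : ℤ) ≤ (hv : ℤ) + 1 := by
                    exact_mod_cast Set.ncard_insert_le _ _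
                _ ≤ (α : ℤ) - 5 := hcH.2
            · rw [nbr_sup, edge_nbr_other hxu hxv, Set.union_empty]
              exact hBH x
      · -- all three placements fail: contradiction
        exfalso
        have hreach : ∀ (F : SimpleGraph V), F.Reachable u v →
            1 ≤ (F.neighborSet u).ncard ∧ 1 ≤ (F.neighborSet v).ncard := by
          intro F hR
          obtain ⟨w1, hw1⟩ := reach_exists_adj hR hne
          obtain ⟨w2, hw2⟩ := reach_exists_adj hR.symm hne.symm
          exact ⟨(Set.ncard_pos (Set.toFinite _)).mpr ⟨w1, hw1⟩,
            (Set.ncard_pos (Set.toFinite _)).mpr ⟨w2, hw2⟩⟩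
        have d1 : (1 ≤ a1 ∧ 1 ≤ b1) ∨ (gg α du ≤ (a1 : ℤ)) ∨ (gg α dv ≤ (b1 : ℤ)) := by
          by_cases hR : F₁.Reachable u v
          · exact Or.inl (hreach F₁ hR)
          · by_cases hA : (a1 : ℤ) + 1 ≤ gg α du
            · by_cases hB : (b1 : ℤ) + 1 ≤ gg α dv
              · exact absurd ⟨hR, hA, hB⟩ hc1
              · exact Or.inr (Or.inr (by omega))
            · exact Or.inr (Or.inl (by omega))
        have d2 : (1 ≤ a2 ∧ 1 ≤ b2) ∨ (gg α du ≤ (a2 : ℤ)) ∨ (gg α dv ≤ (b2 : ℤ)) := by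
          by_cases hR : F₂.Reachable u v
          · exact Or.inl (hreach F₂ hR)
          · by_cases hA : (a2 : ℤ) + 1 ≤ gg α du
            · by_cases hB : (b2 : ℤ) + 1 ≤ gg α dv
              · exact absurd ⟨hR, hA, hB⟩ hc2
              · exact Or.inr (Or.inr (by omega))
            · exact Or.inr (Or.inl (by omega))
        have dH : ((α : ℤ) - 5 ≤ (hu : ℤ)) ∨ ((α : ℤ) - 5 ≤ (hv : ℤ)) := by
          by_cases hA : (hu : ℤ) + 1 ≤ (α : ℤ) - 5
          · by_cases hB : (hv : ℤ) + 1 ≤ (α : ℤ) - 5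
            · exact absurd ⟨hA, hB⟩ hcH
            · exact Or.inr (by omega)
          · exact Or.inl (by omega)
        have hGU2 : (2 : ℤ) ≤ gg α du := two_le_gg α du
        have hGV2 : (2 : ℤ) ≤ gg α dv := two_le_gg α dv
        have hGU : (du : ℤ) - α + 6 ≤ 2 * gg α du := two_gg_ge α du
        have hGV : (dv : ℤ) - α + 6 ≤ 2 * gg α dv := two_gg_ge α dv
        have hHu : ((hu : ℤ)) ≤ (α : ℤ) - 5 := hBH u
        have hHv : ((hv : ℤ)) ≤ (α : ℤ) - 5 := hBH v
        generalize gg α du = GU at *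
        generalize gg α dv = GV at *
        omega

lemma union3_cyc {X : Type*} {A B C Ke E1 E2 Ec : Set X}
    (hU : A ∪ B ∪ C = Ke \ Ec) (hE : Ec = E1 ∪ E2) (hsub : Ec ⊆ Ke) :
    (A ∪ E1) ∪ (B ∪ E2) ∪ C = Ke := by
  have h := Set.ext_iff.mp hU
  have h2 := Set.ext_iff.mp hE
  ext x
  have hx := h x
  have hx2 := h2 x
  have hsx : x ∈ Ec → x ∈ Ke := fun hh => hsub hh
  simp only [Set.mem_union, Set.mem_diff] at hx hx2 ⊢
  by_cases hec : x ∈ Ec <;> tauto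

lemma disj_of_subsets {X : Type*} {A B Ke Ec : Set X}
    (hA : A ⊆ Ke \ Ec) (hB : B ⊆ Ec) : Disjoint A B := by
  rw [Set.disjoint_left]
  intro x hx hxB
  exact (hA hx).2 (hB hxB)

lemma case3 (α : ℕ) (hα : 5 ≤ α) {K : SimpleGraph V} (n : ℕ) (f : ℕ → V) (hn : 2 ≤ n)
    (hinj : ∀ i < 2*n, ∀ j < 2*n, f i = f j → i = j)
    (hadjc : ∀ i < 2*n, K.Adj (f i) (f ((i+1) % (2*n))))
    (hdeg2 : ∀ i < 2*n, i % 2 = 0 → (K.neighborSet (f i)).ncard = 2)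
    (hsum : ∀ x y, K.Adj x y → α + 1 ≤ (K.neighborSet x).ncard + (K.neighborSet y).ncard)
    {F₁ F₂ H : SimpleGraph V}
    (hD : Decomp α (K.deleteEdges {e | ∃ i < 2*n, e = s(f i, f ((i+1) % (2*n)))}) F₁ F₂ H) :
    ∃ F₁' F₂' H' : SimpleGraph V, Decomp α K F₁' F₂' H' := by
  obtain ⟨hU, h12, h1H, h2H, hA1, hA2, hB1, hB2, hBH⟩ := hD
  set N := 2*n with hN
  set Ecyc := {e : Sym2 V | ∃ i < N, e = s(f i, f ((i+1) % N))} with hEcyc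
  set K' := K.deleteEdges Ecyc with hK'def
  set M₁ := {e : Sym2 V | ∃ j < n, e = s(f (2*j), f (2*j+1))} with hM₁
  set M₂ := {e : Sym2 V | ∃ j < n, e = s(f (2*j+1), f ((2*j+2) % N))} with hM₂
  have hN4 : 4 ≤ N := by omega
  have hN0 : 0 < N := by omega
  -- injectivity as ne
  have hfne : ∀ i < N, ∀ j < N, i ≠ j → f i ≠ f j := by
    intro i hi j hj hij hf
    exact hij (hinj i hi j hj hf)
  -- basic edges
  have edge1 : ∀ j < n, K.Adj (f (2*j)) (f (2*j+1)) := by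
    intro j hj
    have h := hadjc (2*j) (by omega)
    rwa [Nat.mod_eq_of_lt (by omega)] at h
  have edge2 : ∀ j < n, K.Adj (f (2*j+1)) (f ((2*j+2) % N)) := by
    intro j hj
    exact hadjc (2*j+1) (by omega)
  -- previous index of an even position
  have hpIdx : ∀ j < n, (if j = 0 then N-1 else 2*j-1) < N ∧
      ((if j = 0 then N-1 else 2*j-1) + 1) % N = 2*j := by
    intro j hj
    split_ifs with h0
    · subst h0
      refine ⟨by omega, ?_⟩
      rw [show N-1+1 = N by omega, Nat.mod_self]
    · refine ⟨by omega, ?_⟩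
      rw [show 2*j-1+1 = 2*j by omega, Nat.mod_eq_of_lt (by omega)]
  have hprev_uniq : ∀ j < n, ∀ p < N, (p+1) % N = 2*j → p = (if j = 0 then N-1 else 2*j-1) := by
    intro j hj p hp hmod
    rcases Nat.lt_or_ge (p+1) N with h | h
    · rw [Nat.mod_eq_of_lt h] at hmod
      split_ifs with h0 <;> omega
    · have hpN : p + 1 = N := by omega
      rw [hpN, Nat.mod_self] at hmod
      split_ifs with h0 <;> omega
  have hEcK : Ecyc ⊆ K.edgeSet := by
    rintro e ⟨i, hi, rfl⟩
    exact hadjc i hi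
  have hmem1 : ∀ i, i < N → s(f i, f ((i+1) % N)) ∈ Ecyc := fun i hi => ⟨i, hi, rfl⟩
  -- general adjacency analysis in Ecyc
  have hEcyc_adj : ∀ j, j < N → ∀ y, s(f j, y) ∈ Ecyc →
      y = f ((j+1) % N) ∨ ∃ p, p < N ∧ (p+1) % N = j ∧ y = f p := by
    rintro j hj y ⟨i, hi, he⟩
    rcases Sym2.eq_iff.mp he with ⟨h1, h2⟩ | ⟨h1, h2⟩
    · have hji : j = i := hinj j hj i hi h1
      subst hji
      exact Or.inl h2
    · have hji : j = (i+1) % N := hinj j hj ((i+1) % N) (Nat.mod_lt _ hN0) h1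
      exact Or.inr ⟨i, hi, hji.symm, h2⟩
  -- specialization: odd vertices
  have hodd_adj : ∀ j, j < n → ∀ y, s(f (2*j+1), y) ∈ Ecyc →
      y = f ((2*j+2) % N) ∨ y = f (2*j) := by
    intro j hj y hy
    rcases hEcyc_adj (2*j+1) (by omega) y hy with h | ⟨p, hp, hmod, rfl⟩
    · left
      rwa [show 2*j+1+1 = 2*j+2 by omega] at h
    · right
      rcases Nat.lt_or_ge (p+1) N with h | h
      · rw [Nat.mod_eq_of_lt h] at hmod
        have : p = 2*j := by omega
        rw [this]
      · have hpN : p + 1 = N := by omega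
        rw [hpN, Nat.mod_self] at hmod
        omega
  -- specialization: even vertices
  have heven_adj : ∀ j, j < n → ∀ y, s(f (2*j), y) ∈ Ecyc →
      y = f (2*j+1) ∨ y = f (if j = 0 then N-1 else 2*j-1) := by
    intro j hj y hy
    rcases hEcyc_adj (2*j) (by omega) y hy with h | ⟨p, hp, hmod, rfl⟩
    · left
      rwa [Nat.mod_eq_of_lt (by omega : 2*j+1 < N)] at h
    · right
      rw [hprev_uniq j hj p hp hmod]
  -- K' adjacency
  have hK'adj : ∀ x y, K'.Adj x y ↔ K.Adj x y ∧ s(x, y) ∉ Ecyc := by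
    intro x y
    rw [hK'def, deleteEdges_adj]
  -- even vertex: two K-neighbors
  have heven_nbr : ∀ j, j < n → K.neighborSet (f (2*j)) =
      {f (if j = 0 then N-1 else 2*j-1), f (2*j+1)} := by
    intro j hj
    obtain ⟨hpN, hpmod⟩ := hpIdx j hj
    set p := if j = 0 then N-1 else 2*j-1 with hpdef
    have hpne2j : p ≠ 2*j := by split_ifs at hpdef <;> omega
    have hpne2j1 : p ≠ 2*j+1 := by split_ifs at hpdef <;> omega
    have hadj0 : K.Adj (f (2*j)) (f p) := by
      have h := hadjc p hpN
      rw [hpmod] at h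
      exact h.symm
    have hadj1 : K.Adj (f (2*j)) (f (2*j+1)) := edge1 j hj
    have hsub : {f p, f (2*j+1)} ⊆ K.neighborSet (f (2*j)) := by
      rintro y (rfl | rfl)
      · exact hadj0
      · exact hadj1
    have hfpne : f p ≠ f (2*j+1) := hfne p hpN (2*j+1) (by omega) hpne2j1
    have hcard2 : ({f p, f (2*j+1)} : Set V).ncard = 2 := Set.ncard_pair hfpne
    have hKc : (K.neighborSet (f (2*j))).ncard = 2 := hdeg2 (2*j) (by omega) (by omega)
    exact (Set.eq_of_subset_of_ncard_le hsub (by rw [hcard2, hKc]) (Set.toFinite _)).symm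
  -- even vertices isolated in K'
  have hK'even : ∀ j, j < n → K'.neighborSet (f (2*j)) = ∅ := by
    intro j hj
    obtain ⟨hpN, hpmod⟩ := hpIdx j hj
    ext y
    simp only [mem_neighborSet, Set.mem_empty_iff_false, iff_false]
    intro hadj
    rw [hK'adj] at hadj
    obtain ⟨hKxy, hnot⟩ := hadj
    have hy : y ∈ K.neighborSet (f (2*j)) := hKxy
    rw [heven_nbr j hj] at hy
    rcases hy with rfl | rfl
    · apply hnot
      have := hmem1 _ hpN
      rw [hpmod] at this
      rwa [Sym2.eq_swap]
    · apply hnot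
      have := hmem1 (2*j) (by omega)
      rwa [Nat.mod_eq_of_lt (by omega : 2*j+1 < N)] at this
  -- odd vertices lose exactly two neighbors
  have hK'odd : ∀ j, j < n → K'.neighborSet (f (2*j+1)) =
      K.neighborSet (f (2*j+1)) \ {f (2*j), f ((2*j+2) % N)} := by
    intro j hj
    ext y
    simp only [mem_neighborSet, Set.mem_diff, Set.mem_insert_iff, Set.mem_singleton_iff]
    rw [hK'adj]
    constructor
    · rintro ⟨hKxy, hnot⟩
      refine ⟨hKxy, ?_⟩
      rintro (rfl | rfl)
      · apply hnot
        have := hmem1 (2*j) (by omega)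
        rw [Nat.mod_eq_of_lt (by omega : 2*j+1 < N)] at this
        rwa [Sym2.eq_swap]
      · exact hnot (hmem1 (2*j+1) (by omega))
    · rintro ⟨hKxy, hnot⟩
      refine ⟨hKxy, fun hmem => ?_⟩
      rcases hodd_adj j hj y hmem with rfl | rfl
      · exact hnot (Or.inr rfl)
      · exact hnot (Or.inl rfl)
  -- off-cycle vertices keep their neighborhoods
  have hK'off : ∀ x, (∀ i, i < N → x ≠ f i) → K'.neighborSet x = K.neighborSet x := by
    intro x hx
    ext y
    simp only [mem_neighborSet]
    rw [hK'adj]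
    constructor
    · exact fun h => h.1
    · intro h
      refine ⟨h, ?_⟩
      rintro ⟨i, hi, he⟩
      rcases Sym2.eq_iff.mp he with ⟨h1, h2⟩ | ⟨h1, h2⟩
      · exact hx i hi h1
      · exact hx ((i+1) % N) (Nat.mod_lt _ hN0) h1
  -- degree facts at odd vertices
  have hnxt_ne : ∀ j, j < n → (2*j+2) % N ≠ 2*j := by
    intro j hj
    rcases Nat.lt_or_ge (2*j+2) N with h | h
    · rw [Nat.mod_eq_of_lt h]; omega
    · have : 2*j+2 = N := by omega
      rw [this, Nat.mod_self]; omega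
  have hnxt_lt : ∀ j, j < n → (2*j+2) % N < N := fun j hj => Nat.mod_lt _ hN0
  have hodd_deg_ge : ∀ j, j < n → α ≤ (K.neighborSet (f (2*j+1))).ncard + 1 := by
    intro j hj
    have h := hsum _ _ (edge1 j hj)
    rw [hdeg2 (2*j) (by omega) (by omega)] at h
    omega
  have hodd_deg' : ∀ j, j < n → (K'.neighborSet (f (2*j+1))).ncard =
      (K.neighborSet (f (2*j+1))).ncard - 2 := by
    intro j hj
    rw [hK'odd j hj]
    have hsub : ({f (2*j), f ((2*j+2) % N)} : Set V) ⊆ K.neighborSet (f (2*j+1)) := by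
      rintro y (rfl | rfl)
      · exact (edge1 j hj).symm
      · exact edge2 j hj
    have hne2 : f (2*j) ≠ f ((2*j+2) % N) :=
      hfne (2*j) (by omega) ((2*j+2) % N) (hnxt_lt j hj) (fun h => hnxt_ne j hj h.symm)
    rw [Set.ncard_diff hsub (Set.toFinite _), Set.ncard_pair hne2]
  -- fromEdgeSet M₁ adjacency
  have hM1_adj : ∀ x y, (fromEdgeSet M₁).Adj x y ↔
      (∃ j, j < n ∧ ((x = f (2*j) ∧ y = f (2*j+1)) ∨ (x = f (2*j+1) ∧ y = f (2*j)))) := by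
    intro x y
    rw [fromEdgeSet_adj]
    constructor
    · rintro ⟨⟨j, hj, he⟩, hne⟩
      rcases Sym2.eq_iff.mp he with ⟨h1, h2⟩ | ⟨h1, h2⟩
      · exact ⟨j, hj, Or.inl ⟨h1, h2⟩⟩
      · exact ⟨j, hj, Or.inr ⟨h1, h2⟩⟩
    · rintro ⟨j, hj, ⟨rfl, rfl⟩ | ⟨rfl, rfl⟩⟩
      · exact ⟨⟨j, hj, rfl⟩, hfne (2*j) (by omega) (2*j+1) (by omega) (by omega)⟩
      · exact ⟨⟨j, hj, Sym2.eq_swap ▸ rfl⟩, hfne (2*j+1) (by omega) (2*j) (by omega) (by omega)⟩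
  have hM2_adj : ∀ x y, (fromEdgeSet M₂).Adj x y ↔
      (∃ j, j < n ∧ ((x = f (2*j+1) ∧ y = f ((2*j+2) % N)) ∨
        (x = f ((2*j+2) % N) ∧ y = f (2*j+1)))) := by
    intro x y
    rw [fromEdgeSet_adj]
    constructor
    · rintro ⟨⟨j, hj, he⟩, hne⟩
      rcases Sym2.eq_iff.mp he with ⟨h1, h2⟩ | ⟨h1, h2⟩
      · exact ⟨j, hj, Or.inl ⟨h1, h2⟩⟩
      · exact ⟨j, hj, Or.inr ⟨h1, h2⟩⟩
    · have hne21 : ∀ j, j < n → (2*j+1) ≠ (2*j+2) % N := by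
        intro j hj h
        rcases Nat.lt_or_ge (2*j+2) N with h' | h'
        · rw [Nat.mod_eq_of_lt h'] at h; omega
        · have h2 : 2*j+2 = N := by omega
          rw [h2, Nat.mod_self] at h; omega
      rintro ⟨j, hj, ⟨rfl, rfl⟩ | ⟨rfl, rfl⟩⟩
      · exact ⟨⟨j, hj, rfl⟩,
          hfne (2*j+1) (by omega) ((2*j+2) % N) (hnxt_lt j hj) (hne21 j hj)⟩
      · exact ⟨⟨j, hj, Sym2.eq_swap ▸ rfl⟩,
          hfne ((2*j+2) % N) (hnxt_lt j hj) (2*j+1) (by omega) (Ne.symm (hne21 j hj))⟩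
  -- neighbor sets of fromEdgeSet M₁
  have nbrM1_even : ∀ j, j < n → (fromEdgeSet M₁).neighborSet (f (2*j)) = {f (2*j+1)} := by
    intro j hj
    ext y
    simp only [mem_neighborSet, Set.mem_singleton_iff, hM1_adj]
    constructor
    · rintro ⟨k, hk, ⟨h1, rfl⟩ | ⟨h1, rfl⟩⟩
      · have := hinj (2*j) (by omega) (2*k) (by omega) h1
        have hjk : j = k := by omega
        rw [hjk]
      · have := hinj (2*j) (by omega) (2*k+1) (by omega) h1
        omega
    · rintro rfl
      exact ⟨j, hj, Or.inl ⟨rfl, rfl⟩⟩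
  have nbrM1_odd : ∀ j, j < n → (fromEdgeSet M₁).neighborSet (f (2*j+1)) = {f (2*j)} := by
    intro j hj
    ext y
    simp only [mem_neighborSet, Set.mem_singleton_iff, hM1_adj]
    constructor
    · rintro ⟨k, hk, ⟨h1, rfl⟩ | ⟨h1, rfl⟩⟩
      · have := hinj (2*j+1) (by omega) (2*k) (by omega) h1
        omega
      · have := hinj (2*j+1) (by omega) (2*k+1) (by omega) h1
        have hjk : j = k := by omega
        rw [hjk]
    · rintro rfl
      exact ⟨j, hj, Or.inr ⟨rfl, rfl⟩⟩
  have nbrM1_off : ∀ x, (∀ i, i < N → x ≠ f i) → (fromEdgeSet M₁).neighborSet x = ∅ := by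
    intro x hx
    ext y
    simp only [mem_neighborSet, Set.mem_empty_iff_false, iff_false, hM1_adj]
    rintro ⟨k, hk, ⟨h1, rfl⟩ | ⟨h1, rfl⟩⟩
    · exact hx (2*k) (by omega) h1
    · exact hx (2*k+1) (by omega) h1
  -- neighbor sets of fromEdgeSet M₂
  have nbrM2_odd : ∀ j, j < n →
      (fromEdgeSet M₂).neighborSet (f (2*j+1)) = {f ((2*j+2) % N)} := by
    intro j hj
    ext y
    simp only [mem_neighborSet, Set.mem_singleton_iff, hM2_adj]
    constructor
    · rintro ⟨k, hk, ⟨h1, rfl⟩ | ⟨h1, rfl⟩⟩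
      · have := hinj (2*j+1) (by omega) (2*k+1) (by omega) h1
        have hjk : j = k := by omega
        rw [hjk]
      · have := hinj (2*j+1) (by omega) ((2*k+2) % N) (hnxt_lt k hk) h1
        rcases Nat.lt_or_ge (2*k+2) N with h' | h'
        · rw [Nat.mod_eq_of_lt h'] at this; omega
        · have h2 : 2*k+2 = N := by omega
          rw [h2, Nat.mod_self] at this; omega
    · rintro rfl
      exact ⟨j, hj, Or.inl ⟨rfl, rfl⟩⟩
  have nbrM2_even : ∀ j, j < n →
      (fromEdgeSet M₂).neighborSet (f (2*j)) = {f (2*(if j = 0 then n-1 else j-1)+1)} := by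
    intro j hj
    set k0 := if j = 0 then n-1 else j-1 with hk0def
    have hk0n : k0 < n := by split_ifs at hk0def <;> omega
    have hk0mod : (2*k0+2) % N = 2*j := by
      split_ifs at hk0def with h0
    -- j = 0 : k0 = n-1
      · rw [hk0def, show 2*(n-1)+2 = N by omega, Nat.mod_self, h0]
      · rw [hk0def, show 2*(j-1)+2 = 2*j by omega, Nat.mod_eq_of_lt (by omega)]
    ext y
    simp only [mem_neighborSet, Set.mem_singleton_iff, hM2_adj]
    constructor
    · rintro ⟨k, hk, ⟨h1, rfl⟩ | ⟨h1, rfl⟩⟩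
      · have := hinj (2*j) (by omega) (2*k+1) (by omega) h1
        omega
      · have := hinj (2*j) (by omega) ((2*k+2) % N) (hnxt_lt k hk) h1
        have hkk0 : k = k0 := by
          rcases Nat.lt_or_ge (2*k+2) N with h' | h'
          · rw [Nat.mod_eq_of_lt h'] at this
            split_ifs at hk0def <;> omega
          · have h2 : 2*k+2 = N := by omega
            rw [h2, Nat.mod_self] at this
            split_ifs at hk0def <;> omega
        rw [hkk0]
    · rintro rfl
      refine ⟨k0, hk0n, Or.inr ⟨?_, rfl⟩⟩
      exact (congrArg f hk0mod).symm
  have nbrM2_off : ∀ x, (∀ i, i < N → x ≠ f i) → (fromEdgeSet M₂).neighborSet x = ∅ := by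
    intro x hx
    ext y
    simp only [mem_neighborSet, Set.mem_empty_iff_false, iff_false, hM2_adj]
    rintro ⟨k, hk, ⟨h1, rfl⟩ | ⟨h1, rfl⟩⟩
    · exact hx (2*k+1) (by omega) h1
    · exact hx ((2*k+2) % N) (hnxt_lt k hk) h1
  -- edge set identities
  have hndM1 : (fromEdgeSet M₁).edgeSet = M₁ := by
    rw [edgeSet_fromEdgeSet]
    ext e
    simp only [Set.mem_diff, Set.mem_setOf_eq]
    constructor
    · exact fun h => h.1
    · rintro ⟨j, hj, rfl⟩
      exact ⟨⟨j, hj, rfl⟩, by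
        simp only [Sym2.mem_diagSet, Sym2.isDiag_iff_proj_eq]
        exact hfne (2*j) (by omega) (2*j+1) (by omega) (by omega)⟩
  have hndM2 : (fromEdgeSet M₂).edgeSet = M₂ := by
    rw [edgeSet_fromEdgeSet]
    ext e
    simp only [Set.mem_diff, Set.mem_setOf_eq]
    constructor
    · exact fun h => h.1
    · rintro ⟨j, hj, rfl⟩
      refine ⟨⟨j, hj, rfl⟩, ?_⟩
      simp only [Sym2.mem_diagSet, Sym2.isDiag_iff_proj_eq]
      refine hfne (2*j+1) (by omega) ((2*j+2) % N) (hnxt_lt j hj) ?_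
      intro h
      rcases Nat.lt_or_ge (2*j+2) N with h' | h'
      · rw [Nat.mod_eq_of_lt h'] at h; omega
      · have h2 : 2*j+2 = N := by omega
        rw [h2, Nat.mod_self] at h; omega
  have hEcsplit : Ecyc = M₁ ∪ M₂ := by
    ext e
    simp only [Set.mem_union, Set.mem_setOf_eq]
    constructor
    · rintro ⟨i, hi, rfl⟩
      by_cases hpar : i % 2 = 0
      · left
        refine ⟨i / 2, by omega, ?_⟩
        rw [show 2*(i/2) = i by omega, Nat.mod_eq_of_lt (by omega : i+1 < N),
          show i + 1 = 2*(i/2)+1 by omega]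
      · right
        refine ⟨i / 2, by omega, ?_⟩
        rw [show 2*(i/2)+1 = i by omega, show 2*(i/2)+2 = i+1 by omega]
    · rintro (⟨j, hj, rfl⟩ | ⟨j, hj, rfl⟩)
      · exact ⟨2*j, by omega, by rw [Nat.mod_eq_of_lt (by omega : 2*j+1 < N)]⟩
      · exact ⟨2*j+1, by omega, by rw [show 2*j+1+1 = 2*j+2 by omega]⟩
  have hM12disj : Disjoint M₁ M₂ := by
    rw [Set.disjoint_left]
    rintro e ⟨j, hj, rfl⟩ ⟨k, hk, he⟩
    rcases Sym2.eq_iff.mp he with ⟨h1, h2⟩ | ⟨h1, h2⟩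
    · have := hinj (2*j) (by omega) (2*k+1) (by omega) h1
      omega
    · have hx1 := hinj (2*j) (by omega) ((2*k+2) % N) (hnxt_lt k hk) h1
      have hx2 := hinj (2*j+1) (by omega) (2*k+1) (by omega) h2
      have hjk : j = k := by omega
      subst hjk
      rcases Nat.lt_or_ge (2*j+2) N with h' | h'
      · rw [Nat.mod_eq_of_lt h'] at hx1; omega
      · have h2' : 2*j+2 = N := by omega
        rw [h2', Nat.mod_self] at hx1; omega
  have hK'e : K'.edgeSet = K.edgeSet \ Ecyc := by
    rw [hK'def]; exact edgeSet_deleteEdges _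
  have hU' : F₁.edgeSet ∪ F₂.edgeSet ∪ H.edgeSet = K.edgeSet \ Ecyc := by
    rw [hU, hK'e]
  have hF1le : F₁.edgeSet ⊆ K.edgeSet \ Ecyc := hU' ▸ fun e he => Or.inl (Or.inl he)
  have hF2le : F₂.edgeSet ⊆ K.edgeSet \ Ecyc := hU' ▸ fun e he => Or.inl (Or.inr he)
  have hHle : H.edgeSet ⊆ K.edgeSet \ Ecyc := hU' ▸ fun e he => Or.inr he
  have hF1leK' : F₁ ≤ K' := edgeSet_subset_edgeSet.mp (by rw [hK'e]; exact hF1le)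
  have hF2leK' : F₂ ≤ K' := edgeSet_subset_edgeSet.mp (by rw [hK'e]; exact hF2le)
  have hM1sub : M₁ ⊆ Ecyc := by rw [hEcsplit]; exact Set.subset_union_left
  have hM2sub : M₂ ⊆ Ecyc := by rw [hEcsplit]; exact Set.subset_union_right
  -- F neighborhoods at even vertices are empty
  have hF1even : ∀ j, j < n → F₁.neighborSet (f (2*j)) = ∅ := by
    intro j hj
    rw [← Set.subset_empty_iff, ← hK'even j hj]
    intro y hy
    exact hF1leK' hy
  have hF2even : ∀ j, j < n → F₂.neighborSet (f (2*j)) = ∅ := by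
    intro j hj
    rw [← Set.subset_empty_iff, ← hK'even j hj]
    intro y hy
    exact hF2leK' hy
  -- acyclicity of F₁ ⊔ fromEdgeSet M₁
  have hacy1 : (F₁ ⊔ fromEdgeSet M₁).IsAcyclic := by
    intro x c hc
    by_cases hex : ∃ e ∈ c.edges, e ∈ M₁
    · obtain ⟨e, hec, hem⟩ := hex
      obtain ⟨j, hj, rfl⟩ := hem
      have hnee : f (2*j) ≠ f (2*j+1) := hfne (2*j) (by omega) (2*j+1) (by omega) (by omega)
      have h2 := (adj_and_reachable_delete_edges_iff_exists_cycle
        (G := F₁ ⊔ fromEdgeSet M₁) (v := f (2*j)) (w := f (2*j+1))).mpr ⟨x, c, hc, hec⟩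
      obtain ⟨w, hw⟩ := reach_exists_adj h2.2 hnee
      rw [deleteEdges_adj] at hw
      obtain ⟨hw1, hw2⟩ := hw
      have hwnbr : w ∈ (F₁ ⊔ fromEdgeSet M₁).neighborSet (f (2*j)) := hw1
      rw [nbr_sup, hF1even j hj, Set.empty_union, nbrM1_even j hj,
        Set.mem_singleton_iff] at hwnbr
      subst hwnbr
      exact hw2 rfl
    · have hs : ∀ e ∈ c.edges, e ∈ F₁.edgeSet := by
        intro e hee
        have h' := c.edges_subset_edgeSet hee
        rw [edgeSet_sup, hndM1] at h'
        rcases h' with h' | h'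
        · exact h'
        · exact absurd ⟨e, hee, h'⟩ hex
      exact hA1 (c.transfer F₁ hs) (hc.transfer hs)
  -- acyclicity of F₂ ⊔ fromEdgeSet M₂
  have hacy2 : (F₂ ⊔ fromEdgeSet M₂).IsAcyclic := by
    intro x c hc
    by_cases hex : ∃ e ∈ c.edges, e ∈ M₂
    · obtain ⟨e, hec, hem⟩ := hex
      obtain ⟨j, hj, rfl⟩ := hem
      set j' := if j = n-1 then 0 else j+1 with hj'def
      have hj'n : j' < n := by split_ifs at hj'def <;> omega
      have hmod : (2*j+2) % N = 2*j' := by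
        split_ifs at hj'def with h0
        · rw [hj'def, show 2*j+2 = N by omega, Nat.mod_self]
        · rw [hj'def, Nat.mod_eq_of_lt (by omega)]
          omega
      have hk0 : (if j' = 0 then n-1 else j'-1) = j := by
        split_ifs at hj'def with h0 <;> split_ifs <;> omega
      have hne' : f (2*j') ≠ f (2*j+1) :=
        hfne (2*j') (by omega) (2*j+1) (by omega) (by omega)
      have h2 := (adj_and_reachable_delete_edges_iff_exists_cycle
        (G := F₂ ⊔ fromEdgeSet M₂) (v := f (2*j+1)) (w := f ((2*j+2) % N))).mpr ⟨x, c, hc, hec⟩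
      have hrev := h2.2.symm
      rw [hmod] at hrev
      obtain ⟨w, hw⟩ := reach_exists_adj hrev hne'
      rw [deleteEdges_adj] at hw
      obtain ⟨hw1, hw2⟩ := hw
      have hwnbr : w ∈ (F₂ ⊔ fromEdgeSet M₂).neighborSet (f (2*j')) := hw1
      rw [nbr_sup, hF2even j' hj'n, Set.empty_union, nbrM2_even j' hj'n, hk0,
        Set.mem_singleton_iff] at hwnbr
      subst hwnbr
      apply hw2
      rw [Set.mem_singleton_iff]; exact Sym2.eq_swap
    · have hs : ∀ e ∈ c.edges, e ∈ F₂.edgeSet := by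
        intro e hee
        have h' := c.edges_subset_edgeSet hee
        rw [edgeSet_sup, hndM2] at h'
        rcases h' with h' | h'
        · exact h'
        · exact absurd ⟨e, hee, h'⟩ hex
      exact hA2 (c.transfer F₂ hs) (hc.transfer hs)
  -- degree bounds
  have hd1 : ∀ x, (((F₁ ⊔ fromEdgeSet M₁).neighborSet x).ncard : ℤ) ≤
      gg α (K.neighborSet x).ncard := by
    intro x
    by_cases hx : ∃ i, i < N ∧ x = f i
    · obtain ⟨i, hiN, rfl⟩ := hx
      by_cases hpar : i % 2 = 0
      · have hi2 : i = 2*(i/2) := by omega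
        have hjn : i/2 < n := by omega
        rw [hi2, nbr_sup, hF1even _ hjn, Set.empty_union, nbrM1_even _ hjn,
          Set.ncard_singleton]
        exact le_trans (by norm_num) (two_le_gg α _)
      · have hi2 : i = 2*(i/2)+1 := by omega
        have hjn : i/2 < n := by omega
        rw [hi2, nbr_sup, nbrM1_odd _ hjn, Set.union_singleton]
        have hstep := gg_step (hodd_deg_ge _ hjn) hα
        have hb := hB1 (f (2*(i/2)+1))
        rw [hodd_deg' _ hjn] at hb
        calc ((insert (f (2*(i/2))) (F₁.neighborSet (f (2*(i/2)+1)))).ncard : ℤ)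
            ≤ ((F₁.neighborSet (f (2*(i/2)+1))).ncard : ℤ) + 1 := by
              exact_mod_cast Set.ncard_insert_le _ _
          _ ≤ gg α ((K.neighborSet (f (2*(i/2)+1))).ncard - 2) + 1 := by linarith
          _ ≤ gg α ((K.neighborSet (f (2*(i/2)+1))).ncard) := hstep
    · push_neg at hx
      rw [nbr_sup, nbrM1_off x hx, Set.union_empty]
      have hb := hB1 x
      rwa [hK'off x hx] at hb
  have hd2 : ∀ x, (((F₂ ⊔ fromEdgeSet M₂).neighborSet x).ncard : ℤ) ≤
      gg α (K.neighborSet x).ncard := by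
    intro x
    by_cases hx : ∃ i, i < N ∧ x = f i
    · obtain ⟨i, hiN, rfl⟩ := hx
      by_cases hpar : i % 2 = 0
      · have hi2 : i = 2*(i/2) := by omega
        have hjn : i/2 < n := by omega
        rw [hi2, nbr_sup, hF2even _ hjn, Set.empty_union, nbrM2_even _ hjn,
          Set.ncard_singleton]
        exact le_trans (by norm_num) (two_le_gg α _)
      · have hi2 : i = 2*(i/2)+1 := by omega
        have hjn : i/2 < n := by omega
        rw [hi2, nbr_sup, nbrM2_odd _ hjn, Set.union_singleton]
        have hstep := gg_step (hodd_deg_ge _ hjn) hα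
        have hb := hB2 (f (2*(i/2)+1))
        rw [hodd_deg' _ hjn] at hb
        calc ((insert (f ((2*(i/2)+2) % N)) (F₂.neighborSet (f (2*(i/2)+1)))).ncard : ℤ)
            ≤ ((F₂.neighborSet (f (2*(i/2)+1))).ncard : ℤ) + 1 := by
              exact_mod_cast Set.ncard_insert_le _ _
          _ ≤ gg α ((K.neighborSet (f (2*(i/2)+1))).ncard - 2) + 1 := by linarith
          _ ≤ gg α ((K.neighborSet (f (2*(i/2)+1))).ncard) := hstep
    · push_neg at hx
      rw [nbr_sup, nbrM2_off x hx, Set.union_empty]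
      have hb := hB2 x
      rwa [hK'off x hx] at hb
  refine ⟨F₁ ⊔ fromEdgeSet M₁, F₂ ⊔ fromEdgeSet M₂, H, ?_, ?_, ?_, ?_, hacy1, hacy2,
    hd1, hd2, hBH⟩
  · rw [edgeSet_sup, edgeSet_sup, hndM1, hndM2]
    exact union3_cyc hU' hEcsplit hEcK
  · rw [edgeSet_sup, edgeSet_sup, hndM1, hndM2, Set.disjoint_union_left]
    constructor
    · rw [Set.disjoint_union_right]
      exact ⟨h12, disj_of_subsets hF1le hM2sub⟩
    · rw [Set.disjoint_union_right]
      exact ⟨(disj_of_subsets hF2le hM1sub).symm, hM12disj⟩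
  · rw [edgeSet_sup, hndM1, Set.disjoint_union_left]
    exact ⟨h1H, (disj_of_subsets hHle hM1sub).symm⟩
  · rw [edgeSet_sup, hndM2, Set.disjoint_union_left]
    exact ⟨h2H, (disj_of_subsets hHle hM2sub).symm⟩

lemma main_key (α : ℕ) (hα : 5 ≤ α) (G : SimpleGraph V)
    (hG : ∀ G' : G.Subgraph, G'.verts.Nonempty →
      (∃ v ∈ G'.verts, (G'.neighborSet v).ncard ≤ 1) ∨
      (∃ u v, G'.Adj u v ∧ (G'.neighborSet u).ncard + (G'.neighborSet v).ncard ≤ α) ∨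
      SubgraphHasTwoAlternatingCycle G') :
    ∀ (m : ℕ) (K : SimpleGraph V), K ≤ G → K.edgeSet.ncard = m →
      ∃ F₁ F₂ H : SimpleGraph V, Decomp α K F₁ F₂ H := by
  intro m
  induction m using Nat.strong_induction_on with
  | _ m ih =>
  intro K hKG hm
  by_cases hKe : K.edgeSet = ∅
  · refine ⟨⊥, ⊥, ⊥, ?_, ?_, ?_, ?_, isAcyclic_bot, isAcyclic_bot, ?_, ?_, ?_⟩
    · simp [hKe]
    · simp
    · simp
    · simp
    · intro v
      have hb : ((⊥ : SimpleGraph V).neighborSet v) = ∅ := by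
        ext w; simp [mem_neighborSet]
      rw [hb, Set.ncard_empty]
      exact le_trans (by norm_num) (two_le_gg α _)
    · intro v
      have hb : ((⊥ : SimpleGraph V).neighborSet v) = ∅ := by
        ext w; simp [mem_neighborSet]
      rw [hb, Set.ncard_empty]
      exact le_trans (by norm_num) (two_le_gg α _)
    · intro v
      have hb : ((⊥ : SimpleGraph V).neighborSet v) = ∅ := by
        ext w; simp [mem_neighborSet]
      rw [hb, Set.ncard_empty]
      have : (5 : ℤ) ≤ (α : ℤ) := by exact_mod_cast hα
      omega
  · have hKadj : ∃ u v, K.Adj u v := by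
      obtain ⟨e0, he0⟩ := Set.nonempty_iff_ne_empty.mpr hKe
      induction e0 using Sym2.ind with
      | _ x y => exact ⟨x, y, he0⟩
    obtain ⟨u0, v0, hadj0⟩ := hKadj
    set G' : G.Subgraph :=
      { verts := K.support
        Adj := K.Adj
        adj_sub := fun h => hKG h
        edge_vert := fun h => ⟨_, h⟩
        symm := K.symm } with hG'def
    have hverts : G'.verts.Nonempty := ⟨u0, ⟨v0, hadj0⟩⟩
    have hdel_lt : ∀ (S : Set (Sym2 V)) (e : Sym2 V), e ∈ K.edgeSet → e ∈ S →
        (K.deleteEdges S).edgeSet.ncard < m := by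
      intro S e heK heS
      rw [edgeSet_deleteEdges, ← hm]
      apply Set.ncard_lt_ncard ?_ (Set.toFinite _)
      constructor
      · exact Set.diff_subset
      · intro hsub
        exact (hsub heK).2 heS
    by_cases h1 : ∃ v, (∃ w, K.Adj v w) ∧ (K.neighborSet v).ncard ≤ 1
    · obtain ⟨v1, ⟨u1, hadj1⟩, hc1⟩ := h1
      have hd1 : (K.neighborSet v1).ncard = 1 := by
        have : 0 < (K.neighborSet v1).ncard :=
          (Set.ncard_pos (Set.toFinite _)).mpr ⟨u1, hadj1⟩
        omega
      have hlt := hdel_lt {s(u1, v1)} s(u1, v1) hadj1.symm rfl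
      obtain ⟨F₁, F₂, H, hD⟩ := ih _ hlt (K.deleteEdges _)
        (le_trans (deleteEdges_le _) hKG) rfl
      exact insert_one α hα hadj1.symm (Or.inr hd1) hD
    · by_cases h2 : ∃ u v, K.Adj u v ∧
          (K.neighborSet u).ncard + (K.neighborSet v).ncard ≤ α
      · obtain ⟨u1, v1, hadj1, hc2⟩ := h2
        have hlt := hdel_lt {s(u1, v1)} s(u1, v1) hadj1 rfl
        obtain ⟨F₁, F₂, H, hD⟩ := ih _ hlt (K.deleteEdges _)
          (le_trans (deleteEdges_le _) hKG) rfl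
        exact insert_one α hα hadj1 (Or.inl hc2) hD
      · -- the 2-alternating cycle case
        have hcyc : SubgraphHasTwoAlternatingCycle G' := by
          rcases hG G' hverts with h | h | h
          · exfalso
            obtain ⟨v1, hv1, hle⟩ := h
            obtain ⟨w1, hw1⟩ := hv1
            exact h1 ⟨v1, ⟨w1, hw1⟩, hle⟩
          · exfalso
            obtain ⟨u1, v1, hadj1, hle⟩ := h
            exact h2 ⟨u1, v1, hadj1, hle⟩
          · exact h
        obtain ⟨n, f, hn, hinj, hadjc, hdeg2⟩ := hcyc
        push_neg at h2
        have hsum : ∀ x y, K.Adj x y →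
            α + 1 ≤ (K.neighborSet x).ncard + (K.neighborSet y).ncard := by
          intro x y hxy
          have := h2 x y hxy
          omega
        have h0N : 0 < 2*n := by omega
        have he1K : s(f 0, f ((0+1) % (2*n))) ∈ K.edgeSet := hadjc 0 h0N
        have he1S : s(f 0, f ((0+1) % (2*n))) ∈
            {e : Sym2 V | ∃ i < 2*n, e = s(f i, f ((i+1) % (2*n)))} := ⟨0, h0N, rfl⟩
        have hlt := hdel_lt _ _ he1K he1S
        obtain ⟨F₁, F₂, H, hD⟩ := ih _ hlt (K.deleteEdges _)
          (le_trans (deleteEdges_le _) hKG) rfl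
        exact case3 α hα n f hn hinj hadjc hdeg2 hsum hD

end EPAux

end EPAux

/-- Let `α ≥ 5` and let `G` be a finite simple graph with maximum
degree `Δ` such that every (nonempty) subgraph `G'` of `G` has a vertex of degree at
most 1, or contains an edge `uv` with `d_{G'}(u) + d_{G'}(v) ≤ α`, or contains a
2-alternating cycle. Then `E(G)` can be partitioned into two forests `F₁`, `F₂` and a
subgraph `H` with `Δ(Fᵢ) ≤ max {2, ⌈(Δ - α + 6)/2⌉}` and `Δ(H) ≤ α - 5`. -/
theorem statement1 {V : Type*} [Fintype V] (α : ℕ) (hα : 5 ≤ α) (G : SimpleGraph V)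
    [DecidableRel G.Adj] (Δ : ℕ) (hΔ : Δ = G.maxDegree)
    (hG : ∀ G' : G.Subgraph, G'.verts.Nonempty →
      (∃ v ∈ G'.verts, (G'.neighborSet v).ncard ≤ 1) ∨
      (∃ u v, G'.Adj u v ∧ (G'.neighborSet u).ncard + (G'.neighborSet v).ncard ≤ α) ∨
      SubgraphHasTwoAlternatingCycle G') :
    ∃ F₁ F₂ H : SimpleGraph V,
      EdgePartition3 G F₁ F₂ H ∧
      F₁.IsAcyclic ∧ F₂.IsAcyclic ∧
      (∀ v, ((F₁.neighborSet v).ncard : ℤ) ≤ max 2 ⌈((Δ : ℚ) - α + 6) / 2⌉) ∧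
      (∀ v, ((F₂.neighborSet v).ncard : ℤ) ≤ max 2 ⌈((Δ : ℚ) - α + 6) / 2⌉) ∧
      (∀ v, (H.neighborSet v).ncard ≤ α - 5) := by
  obtain ⟨F₁, F₂, H, hU, h12, h1H, h2H, hA1, hA2, hB1, hB2, hBH⟩ :=
    EPAux.main_key α hα G hG (G.edgeSet.ncard) G le_rfl rfl
  have hdeg : ∀ v : V, (G.neighborSet v).ncard = G.degree v := by
    intro v
    rw [← SimpleGraph.card_neighborSet_eq_degree, ← Nat.card_coe_set_eq,
      Nat.card_eq_fintype_card]
  have hgg : ∀ v, EPAux.gg α (G.neighborSet v).ncard ≤ max 2 ⌈((Δ : ℚ) - α + 6) / 2⌉ := by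
    intro v
    have h1 : (G.neighborSet v).ncard ≤ Δ := by
      rw [hdeg v, hΔ]; exact SimpleGraph.degree_le_maxDegree G v
    calc EPAux.gg α (G.neighborSet v).ncard ≤ EPAux.gg α Δ := EPAux.gg_mono α h1
      _ = max 2 ⌈((Δ : ℚ) - α + 6) / 2⌉ := rfl
  refine ⟨F₁, F₂, H, ⟨hU, h12, h1H, h2H⟩, hA1, hA2,
    fun v => (hB1 v).trans (hgg v), fun v => (hB2 v).trans (hgg v), fun v => ?_⟩
  have := hBH v
  omega
end

section
/- Let α ≥ 5 be an integer, let G be a finite simple connected graph with maximum degree at least α + 2, and let u be a vertex of G with degree 1, with unique neighbor v. Suppose the graph G' = G − u admits an edge partition into spanning subgraphs F₁', F₂', H' such that F₁' and F₂' are forests with d_{F_i'}(w) ≤ max{2, ⌈(d_{G'}(w) − α + 6)/2⌉} for every vertex w and each i ∈ {1,2}, and H' has maximum degree at most α − 5. Then G admits an edge partition into spanning subgraphs F₁, F₂, H such that F₁ and F₂ are forests with d_{F_i}(w) ≤ max{2, ⌈(d_G(w) − α + 6)/2⌉} for every vertex w and each i ∈ {1,2}, and H has maximum degree at most α − 5.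 -/
open SimpleGraph

open SimpleGraph

section Aux
variable {V : Type*}

lemma aux_adj_sup_edge (X : SimpleGraph V) {u v : V} (h : u ≠ v) (a b : V) :
    (X ⊔ edge u v).Adj a b ↔ X.Adj a b ∨ (a = u ∧ b = v) ∨ (a = v ∧ b = u) := by
  rw [sup_adj, edge_adj]
  constructor
  · rintro (h' | ⟨(⟨rfl, rfl⟩ | ⟨rfl, rfl⟩), hne⟩) <;> tauto
  · rintro (h' | ⟨rfl, rfl⟩ | ⟨rfl, rfl⟩)
    · tauto
    · exact Or.inr ⟨Or.inl ⟨rfl, rfl⟩, h⟩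
    · exact Or.inr ⟨Or.inr ⟨rfl, rfl⟩, h.symm⟩

lemma aux_nbhd_u (X : SimpleGraph V) {u v : V} (hne : u ≠ v) (hiso : ∀ w, ¬ X.Adj u w) :
    (X ⊔ edge u v).neighborSet u = {v} := by
  ext w
  rw [Set.mem_singleton_iff, mem_neighborSet, aux_adj_sup_edge X hne]
  constructor
  · rintro (h | ⟨-, rfl⟩ | ⟨h, -⟩)
    · exact absurd h (hiso w)
    · rfl
    · exact absurd h hne
  · rintro rfl; exact Or.inr (Or.inl ⟨rfl, rfl⟩)

lemma aux_nbhd_v (X : SimpleGraph V) {u v : V} (hne : u ≠ v) :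
    (X ⊔ edge u v).neighborSet v = insert u (X.neighborSet v) := by
  ext w
  rw [Set.mem_insert_iff, mem_neighborSet, mem_neighborSet, aux_adj_sup_edge X hne]
  constructor
  · rintro (h | ⟨h, -⟩ | ⟨-, rfl⟩)
    · exact Or.inr h
    · exact absurd h.symm hne
    · exact Or.inl rfl
  · rintro (rfl | h)
    · exact Or.inr (Or.inr ⟨rfl, rfl⟩)
    · exact Or.inl h

lemma aux_nbhd_other (X : SimpleGraph V) {u v w : V} (hne : u ≠ v) (hwu : w ≠ u) (hwv : w ≠ v) :
    (X ⊔ edge u v).neighborSet w = X.neighborSet w := by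
  ext x
  rw [mem_neighborSet, mem_neighborSet, aux_adj_sup_edge X hne]
  constructor
  · rintro (h | ⟨rfl, -⟩ | ⟨rfl, -⟩)
    · exact h
    · exact absurd rfl hwu
    · exact absurd rfl hwv
  · exact fun h => Or.inl h

lemma aux_edgeSet (X : SimpleGraph V) {u v : V} (hne : u ≠ v) :
    (X ⊔ edge u v).edgeSet = X.edgeSet ∪ {s(u, v)} := by
  rw [edgeSet_sup, edge_edgeSet_of_ne hne]

lemma aux_acyclic {X : SimpleGraph V} (hX : X.IsAcyclic) {u v : V} (hne : u ≠ v)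
    (hiso : ∀ w, ¬ X.Adj u w) : (X ⊔ edge u v).IsAcyclic := by
  classical
  have hnbr : ∀ w, (X ⊔ edge u v).Adj u w → w = v := by
    intro w hw
    rcases (aux_adj_sup_edge X hne u w).mp hw with h | ⟨-, rfl⟩ | ⟨h, -⟩
    · exact absurd h (hiso w)
    · rfl
    · exact absurd h hne
  have key : ∀ (q : (X ⊔ edge u v).Walk u u), ¬ q.IsCycle := by
    intro q hq
    cases q with
    | nil => exact Walk.IsCycle.not_of_nil hq
    | @cons _ b _ h p =>
      have hb : b = v := hnbr _ h
      have hnd := hq.isCircuit.isTrail.edges_nodup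
      rw [Walk.edges_cons] at hnd
      have hnotmem : s(u, b) ∉ p.edges := (List.nodup_cons.mp hnd).1
      obtain ⟨c, hc2, q2, hq2⟩ := Walk.exists_eq_cons_of_ne (fun h => hne (h.trans hb)) p.reverse
      have hcv : c = v := hnbr _ hc2
      have hmem : s(u, c) ∈ p.edges := by
        have : s(u, c) ∈ p.reverse.edges := by rw [hq2]; simp
        rwa [Walk.edges_reverse, List.mem_reverse] at this
      exact hnotmem ((hcv.trans hb.symm) ▸ hmem)
  intro a c hc
  by_cases he : s(u, v) ∈ c.edges
  · have hu : u ∈ c.support := Walk.fst_mem_support_of_mem_edges c he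
    exact key _ (hc.rotate hu)
  · have hsub : ∀ e ∈ c.edges, e ∈ X.edgeSet := by
      intro e' he'
      have h1 : e' ∈ (X ⊔ edge u v).edgeSet := Walk.edges_subset_edgeSet c he'
      rw [aux_edgeSet X hne] at h1
      rcases h1 with h1 | h1
      · exact h1
      · exact absurd (Set.mem_singleton_iff.mp h1 ▸ he') he
    exact hX (c.transfer X hsub) (hc.transfer hsub)

end Aux

section Aux2
variable {V : Type*}

lemma aux_bound_mono (α : ℕ) {d d' : ℕ} (h : d' ≤ d) :
    max 2 ⌈((d' : ℚ) - α + 6) / 2⌉ ≤ max 2 ⌈((d : ℚ) - α + 6) / 2⌉ := by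
  apply max_le_max le_rfl
  apply Int.ceil_mono
  have : (d' : ℚ) ≤ d := by exact_mod_cast h
  linarith

lemma EdgePartition3.swap {G F₁ F₂ H : SimpleGraph V} (h : EdgePartition3 G F₁ F₂ H) :
    EdgePartition3 G F₂ F₁ H := by
  obtain ⟨h1, h2, h3, h4⟩ := h
  refine ⟨?_, h2.symm, h4, h3⟩
  rw [← h1, Set.union_comm F₂.edgeSet F₁.edgeSet]

lemma statement5_aux [Fintype V] (α : ℕ)
    (G G' A B H' : SimpleGraph V) (u v : V) (hne : u ≠ v)
    (hEdge : G.edgeSet = G'.edgeSet ∪ {s(u, v)})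
    (huG' : ∀ w, ¬ G'.Adj u w)
    (hpart' : EdgePartition3 G' A B H')
    (hA : A.IsAcyclic) (hB : B.IsAcyclic)
    (hdA : ∀ w, ((A.neighborSet w).ncard : ℤ) ≤
      max 2 ⌈(((G.neighborSet w).ncard : ℚ) - α + 6) / 2⌉)
    (hdB : ∀ w, ((B.neighborSet w).ncard : ℤ) ≤
      max 2 ⌈(((G.neighborSet w).ncard : ℚ) - α + 6) / 2⌉)
    (hH' : ∀ w, (H'.neighborSet w).ncard ≤ α - 5)
    (hdv : ((A.neighborSet v).ncard : ℤ) + 1 ≤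
      max 2 ⌈(((G.neighborSet v).ncard : ℚ) - α + 6) / 2⌉) :
    ∃ F₁ F₂ H : SimpleGraph V,
      EdgePartition3 G F₁ F₂ H ∧ F₁.IsAcyclic ∧ F₂.IsAcyclic ∧
      (∀ w, ((F₁.neighborSet w).ncard : ℤ) ≤
        max 2 ⌈(((G.neighborSet w).ncard : ℚ) - α + 6) / 2⌉) ∧
      (∀ w, ((F₂.neighborSet w).ncard : ℤ) ≤
        max 2 ⌈(((G.neighborSet w).ncard : ℚ) - α + 6) / 2⌉) ∧
      (∀ w, (H.neighborSet w).ncard ≤ α - 5) := by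
  classical
  obtain ⟨hun, h12, h1h, h2h⟩ := hpart'
  have hsubA : A.edgeSet ⊆ G'.edgeSet := by
    rw [← hun]; exact Set.subset_union_left.trans Set.subset_union_left
  have hsubB : B.edgeSet ⊆ G'.edgeSet := by
    rw [← hun]; exact Set.subset_union_right.trans Set.subset_union_left
  have hsubH : H'.edgeSet ⊆ G'.edgeSet := by
    rw [← hun]; exact Set.subset_union_right
  have hisoA : ∀ w, ¬ A.Adj u w := fun w h =>
    huG' w (G'.mem_edgeSet.mp (hsubA (A.mem_edgeSet.mpr h)))
  have heG' : s(u, v) ∉ G'.edgeSet := fun h => huG' v (G'.mem_edgeSet.mp h)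
  have heA : s(u, v) ∉ A.edgeSet := fun h => heG' (hsubA h)
  have heB : s(u, v) ∉ B.edgeSet := fun h => heG' (hsubB h)
  have heH : s(u, v) ∉ H'.edgeSet := fun h => heG' (hsubH h)
  refine ⟨A ⊔ edge u v, B, H', ⟨?_, ?_, ?_, ?_⟩, aux_acyclic hA hne hisoA, hB, ?_, hdB, hH'⟩
  · rw [aux_edgeSet A hne, hEdge, ← hun]
    ext x
    simp only [Set.mem_union]
    tauto
  · rw [aux_edgeSet A hne]
    exact Set.disjoint_union_left.mpr ⟨h12, Set.disjoint_singleton_left.mpr heB⟩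
  · rw [aux_edgeSet A hne]
    exact Set.disjoint_union_left.mpr ⟨h1h, Set.disjoint_singleton_left.mpr heH⟩
  · exact h2h
  · intro w
    by_cases hwu : w = u
    · subst hwu
      rw [aux_nbhd_u A hne hisoA, Set.ncard_singleton]
      exact le_trans one_le_two (le_max_left _ _)
    by_cases hwv : w = v
    · subst hwv
      have hnm : u ∉ A.neighborSet w := fun h => hisoA w (A.adj_symm h)
      rw [aux_nbhd_v A hne, Set.ncard_insert_of_notMem hnm (Set.toFinite _)]
      push_cast
      linarith [hdv]
    · rw [aux_nbhd_other A hne hwu hwv]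
      exact hdA w

end Aux2

/-- Let `α ≥ 5`, let `G` be a finite simple connected graph with
maximum degree at least `α + 2`, and let `u` be a vertex of degree 1 with (unique)
neighbor `v`.  If `G' = G - u` (obtained by deleting `u`, i.e. removing all edges
incident with `u`) has an edge partition into forests `F₁'`, `F₂'` with
`d_{Fᵢ'}(w) ≤ max {2, ⌈(d_{G'}(w) - α + 6)/2⌉}` for all `w`, and a subgraph `H'` with
`Δ(H') ≤ α - 5`, then `G` has an edge partition into forests `F₁`, `F₂` with
`d_{Fᵢ}(w) ≤ max {2, ⌈(d_G(w) - α + 6)/2⌉}` for all `w`, and a subgraph `H` with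
`Δ(H) ≤ α - 5`. -/
theorem statement5 {V : Type*} [Fintype V] (α : ℕ) (hα : 5 ≤ α)
    (G : SimpleGraph V) [DecidableRel G.Adj]
    (hconn : G.Connected) (hΔ : α + 2 ≤ G.maxDegree)
    (u v : V) (huv : G.Adj u v) (hdu : (G.neighborSet u).ncard = 1)
    (G' : SimpleGraph V) (hG' : G' = G.deleteEdges (G.incidenceSet u))
    (F₁' F₂' H' : SimpleGraph V)
    (hpart' : EdgePartition3 G' F₁' F₂' H')
    (hF₁' : F₁'.IsAcyclic) (hF₂' : F₂'.IsAcyclic)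
    (hd₁' : ∀ w, ((F₁'.neighborSet w).ncard : ℤ) ≤
      max 2 ⌈(((G'.neighborSet w).ncard : ℚ) - α + 6) / 2⌉)
    (hd₂' : ∀ w, ((F₂'.neighborSet w).ncard : ℤ) ≤
      max 2 ⌈(((G'.neighborSet w).ncard : ℚ) - α + 6) / 2⌉)
    (hH' : ∀ w, (H'.neighborSet w).ncard ≤ α - 5) :
    ∃ F₁ F₂ H : SimpleGraph V,
      EdgePartition3 G F₁ F₂ H ∧
      F₁.IsAcyclic ∧ F₂.IsAcyclic ∧
      (∀ w, ((F₁.neighborSet w).ncard : ℤ) ≤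
        max 2 ⌈(((G.neighborSet w).ncard : ℚ) - α + 6) / 2⌉) ∧
      (∀ w, ((F₂.neighborSet w).ncard : ℤ) ≤
        max 2 ⌈(((G.neighborSet w).ncard : ℚ) - α + 6) / 2⌉) ∧
      (∀ w, (H.neighborSet w).ncard ≤ α - 5) := by
  classical
  have hne : u ≠ v := huv.ne
  have hG'adj : ∀ a b, G'.Adj a b ↔ G.Adj a b ∧ a ≠ u ∧ b ≠ u := by
    subst hG'
    intro a b
    rw [deleteEdges_adj]
    have hmem : s(a, b) ∈ G.incidenceSet u ↔ G.Adj a b ∧ (u = a ∨ u = b) := by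
      simp [incidenceSet, Sym2.mem_iff]
    rw [hmem]
    constructor
    · rintro ⟨h, hn⟩
      exact ⟨h, fun e => hn ⟨h, Or.inl e.symm⟩, fun e => hn ⟨h, Or.inr e.symm⟩⟩
    · rintro ⟨h, h1, h2⟩
      refine ⟨h, ?_⟩
      rintro ⟨-, (rfl | rfl)⟩
      · exact h1 rfl
      · exact h2 rfl
  have hNu : G.neighborSet u = {v} := by
    obtain ⟨a, ha⟩ := Set.ncard_eq_one.mp hdu
    have hv : v ∈ G.neighborSet u := huv
    rw [ha] at hv ⊢
    rw [Set.mem_singleton_iff] at hv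
    rw [← hv]
  have hAdjU : ∀ a, G.Adj u a → a = v := by
    intro a h
    have : a ∈ G.neighborSet u := h
    rw [hNu] at this
    exact this
  have hnotuG' : ∀ w, ¬ G'.Adj u w := fun w h => ((hG'adj u w).mp h).2.1 rfl
  have hEdge : G.edgeSet = G'.edgeSet ∪ {s(u, v)} := by
    ext e
    induction e with
    | h a b =>
      rw [Set.mem_union, mem_edgeSet, mem_edgeSet, hG'adj, Set.mem_singleton_iff]
      constructor
      · intro h
        by_cases hau : a = u
        · subst hau
          right
          rw [hAdjU b h]
        by_cases hbu : b = u
        · subst hbu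
          right
          rw [hAdjU a h.symm, Sym2.eq_swap]
        · exact Or.inl ⟨h, hau, hbu⟩
      · rintro (⟨h, -, -⟩ | h)
        · exact h
        · rw [Sym2.eq_iff] at h
          rcases h with ⟨rfl, rfl⟩ | ⟨rfl, rfl⟩
          · exact huv
          · exact huv.symm
  have hNv' : G'.neighborSet v = G.neighborSet v \ {u} := by
    ext x
    rw [Set.mem_diff, mem_neighborSet, mem_neighborSet, hG'adj, Set.mem_singleton_iff]
    constructor
    · rintro ⟨h, -, h2⟩
      exact ⟨h, h2⟩
    · rintro ⟨h, h2⟩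
      exact ⟨h, fun e => hne e.symm, h2⟩
  have hNvcard : (G.neighborSet v).ncard = (G'.neighborSet v).ncard + 1 := by
    have := Set.ncard_diff_singleton_add_one (show u ∈ G.neighborSet v from huv.symm)
      (Set.toFinite _)
    rw [hNv']
    omega
  have hcard_mono : ∀ w, (G'.neighborSet w).ncard ≤ (G.neighborSet w).ncard := fun w =>
    Set.ncard_le_ncard (fun x h => ((hG'adj w x).mp h).1) (Set.toFinite _)
  have hd₁ : ∀ w, ((F₁'.neighborSet w).ncard : ℤ) ≤
      max 2 ⌈(((G.neighborSet w).ncard : ℚ) - α + 6) / 2⌉ := fun w =>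
    (hd₁' w).trans (aux_bound_mono α (hcard_mono w))
  have hd₂ : ∀ w, ((F₂'.neighborSet w).ncard : ℤ) ≤
      max 2 ⌈(((G.neighborSet w).ncard : ℚ) - α + 6) / 2⌉ := fun w =>
    (hd₂' w).trans (aux_bound_mono α (hcard_mono w))
  obtain ⟨hun, h12, h1h, h2h⟩ := id hpart'
  have hsubF₁ : F₁'.edgeSet ⊆ G'.edgeSet := by
    rw [← hun]; exact Set.subset_union_left.trans Set.subset_union_left
  have hsubF₂ : F₂'.edgeSet ⊆ G'.edgeSet := by
    rw [← hun]; exact Set.subset_union_right.trans Set.subset_union_left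
  have hsubH : H'.edgeSet ⊆ G'.edgeSet := by
    rw [← hun]; exact Set.subset_union_right
  have heG' : s(u, v) ∉ G'.edgeSet := fun h => hnotuG' v (G'.mem_edgeSet.mp h)
  by_cases hcase : (H'.neighborSet v).ncard < α - 5
  · -- add the edge to H'
    have hisoH : ∀ w, ¬ H'.Adj u w := fun w h =>
      hnotuG' w (G'.mem_edgeSet.mp (hsubH (H'.mem_edgeSet.mpr h)))
    refine ⟨F₁', F₂', H' ⊔ edge u v, ⟨?_, h12, ?_, ?_⟩, hF₁', hF₂', hd₁, hd₂, ?_⟩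
    · rw [aux_edgeSet H' hne, hEdge, ← hun]
      ext x
      simp only [Set.mem_union]
      tauto
    · rw [aux_edgeSet H' hne]
      exact Set.disjoint_union_right.mpr ⟨h1h,
        Set.disjoint_singleton_right.mpr (fun h => heG' (hsubF₁ h))⟩
    · rw [aux_edgeSet H' hne]
      exact Set.disjoint_union_right.mpr ⟨h2h,
        Set.disjoint_singleton_right.mpr (fun h => heG' (hsubF₂ h))⟩
    · intro w
      by_cases hwu : w = u
      · subst hwu
        rw [aux_nbhd_u H' hne hisoH, Set.ncard_singleton]
        omega
      by_cases hwv : w = v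
      · subst hwv
        have hnm : u ∉ H'.neighborSet w := fun h => hisoH w (H'.adj_symm h)
        rw [aux_nbhd_v H' hne, Set.ncard_insert_of_notMem hnm (Set.toFinite _)]
        omega
      · rw [aux_nbhd_other H' hne hwu hwv]
        exact hH' w
  · -- d_{H'}(v) = α - 5 : add the edge to the sparser forest
    have hdh : (H'.neighborSet v).ncard = α - 5 := le_antisymm (hH' v) (le_of_not_gt hcase)
    have hdisj : ∀ (X Y : SimpleGraph V), Disjoint X.edgeSet Y.edgeSet →
        Disjoint (X.neighborSet v) (Y.neighborSet v) := by
      intro X Y h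
      rw [Set.disjoint_left]
      intro x hx1 hx2
      exact Set.disjoint_left.mp h (X.mem_edgeSet.mpr hx1) (Y.mem_edgeSet.mpr hx2)
    have hsum : (F₁'.neighborSet v).ncard + (F₂'.neighborSet v).ncard
        + (H'.neighborSet v).ncard ≤ (G'.neighborSet v).ncard := by
      have hsub : (F₁'.neighborSet v ∪ F₂'.neighborSet v ∪ H'.neighborSet v)
          ⊆ G'.neighborSet v := by
        rintro x ((h | h) | h)
        · exact G'.mem_edgeSet.mp (hsubF₁ (F₁'.mem_edgeSet.mpr h))
        · exact G'.mem_edgeSet.mp (hsubF₂ (F₂'.mem_edgeSet.mpr h))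
        · exact G'.mem_edgeSet.mp (hsubH (H'.mem_edgeSet.mpr h))
      calc (F₁'.neighborSet v).ncard + (F₂'.neighborSet v).ncard + (H'.neighborSet v).ncard
          = (F₁'.neighborSet v ∪ F₂'.neighborSet v ∪ H'.neighborSet v).ncard := by
            rw [Set.ncard_union_eq (Set.disjoint_union_left.mpr
                ⟨hdisj _ _ h1h, hdisj _ _ h2h⟩) (Set.toFinite _) (Set.toFinite _),
              Set.ncard_union_eq (hdisj _ _ h12) (Set.toFinite _) (Set.toFinite _)]
        _ ≤ (G'.neighborSet v).ncard := Set.ncard_le_ncard hsub (Set.toFinite _)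
    have hkey : ∀ (d : ℕ), 2 * d + α ≤ (G'.neighborSet v).ncard + 5 →
        ((d : ℤ) + 1 ≤ max 2 ⌈(((G.neighborSet v).ncard : ℚ) - α + 6) / 2⌉) := by
      intro d hd
      refine le_trans ?_ (le_max_right _ _)
      have hQ : ((d : ℚ) + 1) ≤ (((G.neighborSet v).ncard : ℚ) - α + 6) / 2 := by
        rw [hNvcard]
        have : (2 * (d : ℚ) + α) ≤ ((G'.neighborSet v).ncard : ℚ) + 5 := by
          exact_mod_cast hd
        push_cast
        linarith
      have h2 := Int.ceil_mono hQ
      rwa [show ((d : ℚ) + 1) = (((d : ℤ) + 1 : ℤ) : ℚ) by push_cast; ring,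
        Int.ceil_intCast] at h2
    rcases le_total (F₁'.neighborSet v).ncard (F₂'.neighborSet v).ncard with hle | hle
    · exact statement5_aux α G G' F₁' F₂' H' u v hne hEdge hnotuG' hpart' hF₁' hF₂'
        hd₁ hd₂ hH' (hkey _ (by omega))
    · obtain ⟨F₁, F₂, H, hp, ha1, ha2, hb1, hb2, hbH⟩ :=
        statement5_aux α G G' F₂' F₁' H' u v hne hEdge hnotuG' hpart'.swap hF₂' hF₁'
          hd₂ hd₁ hH' (hkey _ (by omega))
      exact ⟨F₂, F₁, H, hp.swap, ha2, ha1, hb2, hb1, hbH⟩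
end

section
/- Let α ≥ 5 be an integer, let G be a finite simple graph, and let uv be an edge of G with d_G(u) + d_G(v) ≤ α and d_G(u) ≥ 2, d_G(v) ≥ 2. Suppose the graph G' = G − uv admits an edge partition into spanning subgraphs F₁', F₂', H' such that F₁' and F₂' are forests with d_{F_i'}(w) ≤ max{2, ⌈(d_{G'}(w) − α + 6)/2⌉} for every vertex w and each i ∈ {1,2}, and H' has maximum degree at most α − 5. Then G admits an edge partition into spanning subgraphs F₁, F₂, H such that F₁ and F₂ are forests with d_{F_i}(w) ≤ max{2, ⌈(d_G(w) − α + 6)/2⌉} for every vertex w and each i ∈ {1,2}, and H has maximum degree at most α − 5. -/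
open SimpleGraph

namespace Stmt6Aux

variable {V : Type*}

lemma adj_sup_edge_aux {F : SimpleGraph V} {u v x : V}
    (hu : F.neighborSet u = ∅) (h : (F ⊔ edge u v).Adj u x) : x = v := by
  rw [sup_adj] at h
  rcases h with h | h
  · have : x ∈ F.neighborSet u := h
    rw [hu] at this; exact absurd this (Set.notMem_empty x)
  · rw [edge_adj] at h; tauto

lemma isAcyclic_sup_edge {F : SimpleGraph V} {u v : V} (huv : u ≠ v)
    (hF : F.IsAcyclic) (hu : F.neighborSet u = ∅) :
    (F ⊔ edge u v).IsAcyclic := by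
  have hadj : ∀ x, (F ⊔ edge u v).Adj u x → x = v := fun x h => adj_sup_edge_aux hu h
  have key : ∀ (c : (F ⊔ edge u v).Walk u u), ¬ c.IsCycle := by
    intro c hc
    cases c with
    | nil => exact hc.not_of_nil
    | cons h q =>
      rename_i b
      rw [Walk.cons_isCycle_iff] at hc
      obtain ⟨hq, he⟩ := hc
      have hb : b = v := hadj _ h
      subst hb
      obtain ⟨w, hw, q', hq'⟩ := Walk.exists_eq_cons_of_ne huv q.reverse
      have hwv : w = b := hadj _ hw
      apply he
      have h2 : s(u, w) ∈ q.reverse.edges := by rw [hq']; simp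
      rw [Walk.edges_reverse, List.mem_reverse] at h2
      rwa [hwv] at h2
  intro x c hc
  classical
  by_cases hus : u ∈ c.support
  · exact key _ (hc.rotate hus)
  · have hsub : ∀ e ∈ c.edges, e ∈ F.edgeSet := by
      intro e heE
      have h1 : e ∈ (F ⊔ edge u v).edgeSet := c.edges_subset_edgeSet heE
      rw [edgeSet_sup, edge_edgeSet_of_ne huv] at h1
      rcases h1 with h1 | h1
      · exact h1
      · rw [Set.mem_singleton_iff] at h1
        subst h1
        exact absurd (Walk.fst_mem_support_of_mem_edges c heE) hus
    exact hF (c.transfer F hsub) (hc.transfer hsub)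

lemma neighborSet_sup_edge (F : SimpleGraph V) {u v : V} (h : u ≠ v) :
    (F ⊔ edge u v).neighborSet u = insert v (F.neighborSet u) := by
  ext x
  simp only [mem_neighborSet, sup_adj, edge_adj, Set.mem_insert_iff]
  aesop

lemma neighborSet_sup_edge_other (F : SimpleGraph V) {u v w : V} (hu : w ≠ u) (hv : w ≠ v) :
    (F ⊔ edge u v).neighborSet w = F.neighborSet w := by
  ext x
  simp only [mem_neighborSet, sup_adj, edge_adj]
  aesop

lemma bound_mono (α d' d : ℕ) (h : d' ≤ d) :
    max (2:ℤ) ⌈((d':ℚ) - α + 6)/2⌉ ≤ max 2 ⌈((d:ℚ) - α + 6)/2⌉ := by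
  apply max_le_max le_rfl
  apply Int.ceil_le_ceil
  have : (d':ℚ) ≤ d := by exact_mod_cast h
  linarith

end Stmt6Aux

namespace Stmt6Aux

lemma edge_comm' (u v : V) : edge u v = edge v u := by
  ext a b; rw [edge_adj, edge_adj]; tauto

end Stmt6Aux

set_option maxHeartbeats 1000000 in
/-- Let `α ≥ 5`, let `G` be a finite simple graph, and let `uv` be an
edge of `G` with `d_G(u) + d_G(v) ≤ α`, `d_G(u) ≥ 2` and `d_G(v) ≥ 2`.  If
`G' = G - uv` (obtained by deleting the edge `uv`) has an edge partition into forests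
`F₁'`, `F₂'` with `d_{Fᵢ'}(w) ≤ max {2, ⌈(d_{G'}(w) - α + 6)/2⌉}` for all `w`, and a
subgraph `H'` with `Δ(H') ≤ α - 5`, then `G` has an edge partition into forests
`F₁`, `F₂` with `d_{Fᵢ}(w) ≤ max {2, ⌈(d_G(w) - α + 6)/2⌉}` for all `w`, and a
subgraph `H` with `Δ(H) ≤ α - 5`. -/
theorem statement6 {V : Type*} [Fintype V] (α : ℕ) (hα : 5 ≤ α)
    (G : SimpleGraph V) (u v : V) (huv : G.Adj u v)
    (hsum : (G.neighborSet u).ncard + (G.neighborSet v).ncard ≤ α)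
    (hdu : 2 ≤ (G.neighborSet u).ncard) (hdv : 2 ≤ (G.neighborSet v).ncard)
    (G' : SimpleGraph V) (hG' : G' = G.deleteEdges {s(u, v)})
    (F₁' F₂' H' : SimpleGraph V)
    (hpart' : EdgePartition3 G' F₁' F₂' H')
    (hF₁' : F₁'.IsAcyclic) (hF₂' : F₂'.IsAcyclic)
    (hd₁' : ∀ w, ((F₁'.neighborSet w).ncard : ℤ) ≤
      max 2 ⌈(((G'.neighborSet w).ncard : ℚ) - α + 6) / 2⌉)
    (hd₂' : ∀ w, ((F₂'.neighborSet w).ncard : ℤ) ≤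
      max 2 ⌈(((G'.neighborSet w).ncard : ℚ) - α + 6) / 2⌉)
    (hH' : ∀ w, (H'.neighborSet w).ncard ≤ α - 5) :
    ∃ F₁ F₂ H : SimpleGraph V,
      EdgePartition3 G F₁ F₂ H ∧
      F₁.IsAcyclic ∧ F₂.IsAcyclic ∧
      (∀ w, ((F₁.neighborSet w).ncard : ℤ) ≤
        max 2 ⌈(((G.neighborSet w).ncard : ℚ) - α + 6) / 2⌉) ∧
      (∀ w, ((F₂.neighborSet w).ncard : ℤ) ≤
        max 2 ⌈(((G.neighborSet w).ncard : ℚ) - α + 6) / 2⌉) ∧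
      (∀ w, (H.neighborSet w).ncard ≤ α - 5) := by
  classical
  open Stmt6Aux in
  have hne : u ≠ v := huv.ne
  obtain ⟨hUnion, hd12, hd1H, hd2H⟩ := hpart'
  have hE' : G'.edgeSet = G.edgeSet \ {s(u, v)} := by rw [hG', edgeSet_deleteEdges]
  have hsuv : s(u, v) ∈ G.edgeSet := huv
  have hnuv : s(u, v) ∉ G'.edgeSet := by rw [hE']; simp
  have hsub1 : F₁'.edgeSet ⊆ G'.edgeSet := by
    rw [← hUnion]; intro e he; exact Or.inl (Or.inl he)
  have hsub2 : F₂'.edgeSet ⊆ G'.edgeSet := by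
    rw [← hUnion]; intro e he; exact Or.inl (Or.inr he)
  have hsubH : H'.edgeSet ⊆ G'.edgeSet := by
    rw [← hUnion]; intro e he; exact Or.inr he
  have hn1 : s(u, v) ∉ F₁'.edgeSet := fun h => hnuv (hsub1 h)
  have hn2 : s(u, v) ∉ F₂'.edgeSet := fun h => hnuv (hsub2 h)
  have hnH : s(u, v) ∉ H'.edgeSet := fun h => hnuv (hsubH h)
  have hle : G' ≤ G := hG' ▸ G.deleteEdges_le {s(u, v)}
  have hNsub : ∀ w, G'.neighborSet w ⊆ G.neighborSet w := fun w x hx => hle hx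
  have hNle : ∀ w, (G'.neighborSet w).ncard ≤ (G.neighborSet w).ncard :=
    fun w => Set.ncard_le_ncard (hNsub w) (Set.toFinite _)
  have hNu : G'.neighborSet u = G.neighborSet u \ {v} := by
    ext x
    simp only [SimpleGraph.mem_neighborSet, hG', SimpleGraph.deleteEdges_adj,
      Set.mem_singleton_iff, Set.mem_diff, Sym2.eq_iff]
    aesop
  have hNv : G'.neighborSet v = G.neighborSet v \ {u} := by
    ext x
    simp only [SimpleGraph.mem_neighborSet, hG', SimpleGraph.deleteEdges_adj,
      Set.mem_singleton_iff, Set.mem_diff, Sym2.eq_iff]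
    aesop
  have hdGu : (G'.neighborSet u).ncard + 1 = (G.neighborSet u).ncard := by
    rw [hNu]
    exact Set.ncard_diff_singleton_add_one huv (Set.toFinite _)
  have hdGv : (G'.neighborSet v).ncard + 1 = (G.neighborSet v).ncard := by
    rw [hNv]
    exact Set.ncard_diff_singleton_add_one huv.symm (Set.toFinite _)
  have hsplit : ∀ w, G'.neighborSet w =
      F₁'.neighborSet w ∪ F₂'.neighborSet w ∪ H'.neighborSet w := by
    intro w; ext x
    rw [SimpleGraph.mem_neighborSet, ← SimpleGraph.mem_edgeSet, ← hUnion]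
    simp only [Set.mem_union, SimpleGraph.mem_neighborSet, SimpleGraph.mem_edgeSet]
  have hdN12 : ∀ w, Disjoint (F₁'.neighborSet w) (F₂'.neighborSet w) := by
    intro w; rw [Set.disjoint_left]; intro x h1 h2
    exact Set.disjoint_left.1 hd12 ((SimpleGraph.mem_edgeSet _).2 h1) ((SimpleGraph.mem_edgeSet _).2 h2)
  have hdN1H : ∀ w, Disjoint (F₁'.neighborSet w) (H'.neighborSet w) := by
    intro w; rw [Set.disjoint_left]; intro x h1 h2
    exact Set.disjoint_left.1 hd1H ((SimpleGraph.mem_edgeSet _).2 h1) ((SimpleGraph.mem_edgeSet _).2 h2)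
  have hdN2H : ∀ w, Disjoint (F₂'.neighborSet w) (H'.neighborSet w) := by
    intro w; rw [Set.disjoint_left]; intro x h1 h2
    exact Set.disjoint_left.1 hd2H ((SimpleGraph.mem_edgeSet _).2 h1) ((SimpleGraph.mem_edgeSet _).2 h2)
  have hcount : ∀ w, (G'.neighborSet w).ncard =
      (F₁'.neighborSet w).ncard + (F₂'.neighborSet w).ncard + (H'.neighborSet w).ncard := by
    intro w
    rw [hsplit w,
      Set.ncard_union_eq (Set.disjoint_union_left.2 ⟨hdN1H w, hdN2H w⟩)
        (Set.toFinite _) (Set.toFinite _),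
      Set.ncard_union_eq (hdN12 w) (Set.toFinite _) (Set.toFinite _)]
  by_cases hHcase : (H'.neighborSet u).ncard + 6 ≤ α ∧ (H'.neighborSet v).ncard + 6 ≤ α
  · -- add uv to H'
    refine ⟨F₁', F₂', H' ⊔ SimpleGraph.edge u v, ⟨?_, hd12, ?_, ?_⟩, hF₁', hF₂', ?_, ?_, ?_⟩
    · rw [SimpleGraph.edgeSet_sup, SimpleGraph.edge_edgeSet_of_ne hne]
      ext e
      have h0 := Set.ext_iff.1 hUnion e
      rw [hE'] at h0
      simp only [Set.mem_union, Set.mem_diff, Set.mem_singleton_iff] at h0 ⊢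
      by_cases he : e = s(u, v)
      · subst he; tauto
      · tauto
    · rw [SimpleGraph.edgeSet_sup, SimpleGraph.edge_edgeSet_of_ne hne]
      exact Set.disjoint_union_right.2 ⟨hd1H, Set.disjoint_singleton_right.2 hn1⟩
    · rw [SimpleGraph.edgeSet_sup, SimpleGraph.edge_edgeSet_of_ne hne]
      exact Set.disjoint_union_right.2 ⟨hd2H, Set.disjoint_singleton_right.2 hn2⟩
    · intro w; exact le_trans (hd₁' w) (Stmt6Aux.bound_mono α _ _ (hNle w))
    · intro w; exact le_trans (hd₂' w) (Stmt6Aux.bound_mono α _ _ (hNle w))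
    · intro w
      by_cases hw : w = u
      · rw [hw]
        rw [Stmt6Aux.neighborSet_sup_edge _ hne,
          Set.ncard_insert_of_notMem (show v ∉ H'.neighborSet u from fun h => hnH ((SimpleGraph.mem_edgeSet _).2 h))
            (Set.toFinite _)]
        omega
      · by_cases hw2 : w = v
        · rw [hw2]
          rw [Stmt6Aux.edge_comm' u v, Stmt6Aux.neighborSet_sup_edge _ hne.symm,
            Set.ncard_insert_of_notMem
              (show u ∉ H'.neighborSet v from fun h => hnH ((SimpleGraph.mem_edgeSet _).2 (SimpleGraph.Adj.symm h)))
              (Set.toFinite _)]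
          omega
        · rw [Stmt6Aux.neighborSet_sup_edge_other _ hw hw2]
          exact hH' w
  · -- add uv to a forest
    rw [not_and_or] at hHcase
    have hS : (F₁'.neighborSet u).ncard + (F₁'.neighborSet v).ncard +
        (F₂'.neighborSet u).ncard + (F₂'.neighborSet v).ncard ≤ 3 := by
      have h1 := hcount u
      have h2 := hcount v
      rcases hHcase with h6 | h6 <;> push_neg at h6 <;> omega
    by_cases hc1 : (F₁'.neighborSet u).ncard + (F₁'.neighborSet v).ncard ≤ 1
    · refine ⟨F₁' ⊔ SimpleGraph.edge u v, F₂', H', ⟨?_, ?_, ?_, hd2H⟩, ?_, hF₂', ?_, ?_, hH'⟩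
      · rw [SimpleGraph.edgeSet_sup, SimpleGraph.edge_edgeSet_of_ne hne]
        ext e
        have h0 := Set.ext_iff.1 hUnion e
        rw [hE'] at h0
        simp only [Set.mem_union, Set.mem_diff, Set.mem_singleton_iff] at h0 ⊢
        by_cases he : e = s(u, v)
        · subst he; tauto
        · tauto
      · rw [SimpleGraph.edgeSet_sup, SimpleGraph.edge_edgeSet_of_ne hne]
        exact Set.disjoint_union_left.2 ⟨hd12, Set.disjoint_singleton_left.2 hn2⟩
      · rw [SimpleGraph.edgeSet_sup, SimpleGraph.edge_edgeSet_of_ne hne]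
        exact Set.disjoint_union_left.2 ⟨hd1H, Set.disjoint_singleton_left.2 hnH⟩
      · have h0 : (F₁'.neighborSet u).ncard = 0 ∨ (F₁'.neighborSet v).ncard = 0 := by omega
        rcases h0 with h0 | h0
        · exact Stmt6Aux.isAcyclic_sup_edge hne hF₁' ((Set.ncard_eq_zero (Set.toFinite _)).1 h0)
        · rw [Stmt6Aux.edge_comm' u v]
          exact Stmt6Aux.isAcyclic_sup_edge hne.symm hF₁'
            ((Set.ncard_eq_zero (Set.toFinite _)).1 h0)
      · intro w
        by_cases hw : w = u
        · rw [hw]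
          rw [Stmt6Aux.neighborSet_sup_edge _ hne,
            Set.ncard_insert_of_notMem (show v ∉ F₁'.neighborSet u from fun h => hn1 ((SimpleGraph.mem_edgeSet _).2 h))
              (Set.toFinite _)]
          refine le_trans ?_ (le_max_left _ _)
          exact_mod_cast (by omega : (F₁'.neighborSet u).ncard + 1 ≤ 2)
        · by_cases hw2 : w = v
          · rw [hw2]
            rw [Stmt6Aux.edge_comm' u v, Stmt6Aux.neighborSet_sup_edge _ hne.symm,
              Set.ncard_insert_of_notMem
                (show u ∉ F₁'.neighborSet v from fun h => hn1 ((SimpleGraph.mem_edgeSet _).2 (SimpleGraph.Adj.symm h)))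
                (Set.toFinite _)]
            refine le_trans ?_ (le_max_left _ _)
            exact_mod_cast (by omega : (F₁'.neighborSet v).ncard + 1 ≤ 2)
          · rw [Stmt6Aux.neighborSet_sup_edge_other _ hw hw2]
            exact le_trans (hd₁' w) (Stmt6Aux.bound_mono α _ _ (hNle w))
      · intro w; exact le_trans (hd₂' w) (Stmt6Aux.bound_mono α _ _ (hNle w))
    · have hc2 : (F₂'.neighborSet u).ncard + (F₂'.neighborSet v).ncard ≤ 1 := by omega
      refine ⟨F₁', F₂' ⊔ SimpleGraph.edge u v, H', ⟨?_, ?_, hd1H, ?_⟩, hF₁', ?_, ?_, ?_, hH'⟩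
      · rw [SimpleGraph.edgeSet_sup, SimpleGraph.edge_edgeSet_of_ne hne]
        ext e
        have h0 := Set.ext_iff.1 hUnion e
        rw [hE'] at h0
        simp only [Set.mem_union, Set.mem_diff, Set.mem_singleton_iff] at h0 ⊢
        by_cases he : e = s(u, v)
        · subst he; tauto
        · tauto
      · rw [SimpleGraph.edgeSet_sup, SimpleGraph.edge_edgeSet_of_ne hne]
        exact Set.disjoint_union_right.2 ⟨hd12, Set.disjoint_singleton_right.2 hn1⟩
      · rw [SimpleGraph.edgeSet_sup, SimpleGraph.edge_edgeSet_of_ne hne]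
        exact Set.disjoint_union_left.2 ⟨hd2H, Set.disjoint_singleton_left.2 hnH⟩
      · have h0 : (F₂'.neighborSet u).ncard = 0 ∨ (F₂'.neighborSet v).ncard = 0 := by omega
        rcases h0 with h0 | h0
        · exact Stmt6Aux.isAcyclic_sup_edge hne hF₂' ((Set.ncard_eq_zero (Set.toFinite _)).1 h0)
        · rw [Stmt6Aux.edge_comm' u v]
          exact Stmt6Aux.isAcyclic_sup_edge hne.symm hF₂'
            ((Set.ncard_eq_zero (Set.toFinite _)).1 h0)
      · intro w; exact le_trans (hd₁' w) (Stmt6Aux.bound_mono α _ _ (hNle w))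
      · intro w
        by_cases hw : w = u
        · rw [hw]
          rw [Stmt6Aux.neighborSet_sup_edge _ hne,
            Set.ncard_insert_of_notMem (show v ∉ F₂'.neighborSet u from fun h => hn2 ((SimpleGraph.mem_edgeSet _).2 h))
              (Set.toFinite _)]
          refine le_trans ?_ (le_max_left _ _)
          exact_mod_cast (by omega : (F₂'.neighborSet u).ncard + 1 ≤ 2)
        · by_cases hw2 : w = v
          · rw [hw2]
            rw [Stmt6Aux.edge_comm' u v, Stmt6Aux.neighborSet_sup_edge _ hne.symm,
              Set.ncard_insert_of_notMem
                (show u ∉ F₂'.neighborSet v from fun h => hn2 ((SimpleGraph.mem_edgeSet _).2 (SimpleGraph.Adj.symm h)))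
                (Set.toFinite _)]
            refine le_trans ?_ (le_max_left _ _)
            exact_mod_cast (by omega : (F₂'.neighborSet v).ncard + 1 ≤ 2)
          · rw [Stmt6Aux.neighborSet_sup_edge_other _ hw hw2]
            exact le_trans (hd₂' w) (Stmt6Aux.bound_mono α _ _ (hNle w))
end

section
/- Let α ≥ 5 be an integer, let G be a finite simple graph, and let C = v₀v₁⋯v₂ₙ₋₁v₀ (n ≥ 2) be a cycle in G with d_G(v₀) = d_G(v₂) = ⋯ = d_G(v₂ₙ₋₂) = 2 and d_G(v_i) ≥ α − 1 for every odd index i. Suppose the graph G' = G − E(C), obtained by deleting all edges of C, admits an edge partition into spanning subgraphs F₁', F₂', H' such that F₁' and F₂' are forests with d_{F_i'}(w) ≤ max{2, ⌈(d_{G'}(w) − α + 6)/2⌉} for every vertex w and each i ∈ {1,2}, and H' has maximum degree at most α − 5. Then G admits an edge partition into spanning subgraphs F₁, F₂, H such that F₁ and F₂ are forests with d_{F_i}(w) ≤ max{2, ⌈(d_G(w) − α + 6)/2⌉} for every vertex w and each i ∈ {1,2}, and H has maximum degree at most α − 5; indeed one may take H = H', F₁ = F₁' together with the edges v₁v₂,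 v₃v₄, …, v₂ₙ₋₁v₀, and F₂ = F₂' together with the edges v₀v₁, v₂v₃, …, v₂ₙ₋₂v₂ₙ₋₁. -/
open SimpleGraph Walk in
private lemma nbrSet_sup {V : Type*} (A B : SimpleGraph V) (w : V) :
    (A ⊔ B).neighborSet w = A.neighborSet w ∪ B.neighborSet w := rfl

open SimpleGraph Walk in
private lemma acyclic_sup_pendant {V : Type*} {F' M : SimpleGraph V} (hF' : F'.IsAcyclic)
    (h : ∀ e ∈ M.edgeSet, ∃ a b : V, e = s(a, b) ∧ (F' ⊔ M).neighborSet b ⊆ {a}) :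
    (F' ⊔ M).IsAcyclic := by
  classical
  intro u c hc
  by_cases hall : ∀ e ∈ c.edges, e ∈ F'.edgeSet
  · exact hF' (c.transfer F' hall) (hc.transfer hall)
  · push_neg at hall
    obtain ⟨e, hec, heF⟩ := hall
    have heF1 : e ∈ (F' ⊔ M).edgeSet := c.edges_subset_edgeSet hec
    rw [SimpleGraph.edgeSet_sup] at heF1
    have heM : e ∈ M.edgeSet := heF1.resolve_left heF
    obtain ⟨a, b, rfl, hnbr⟩ := h e heM
    have hb : b ∈ c.support := c.snd_mem_support_of_mem_edges hec
    have hc' := hc.rotate hb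
    have hnotnil := hc'.not_nil
    rw [SimpleGraph.Walk.not_nil_iff] at hnotnil
    obtain ⟨x, hadj, q, hq⟩ := hnotnil
    rw [hq] at hc'
    have hxa : x = a := hnbr hadj
    subst hxa
    rw [SimpleGraph.Walk.cons_isCycle_iff] at hc'
    have hab : x ≠ b := fun hxb => (F' ⊔ M).irrefl (hxb ▸ hadj)
    have hqrevnil : ¬ q.reverse.Nil := by
      rw [SimpleGraph.Walk.not_nil_iff_lt_length, SimpleGraph.Walk.length_reverse]
      rcases Nat.eq_zero_or_pos q.length with h0 | h0
      · exact absurd (SimpleGraph.Walk.eq_of_length_eq_zero h0) hab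
      · exact h0
    rw [SimpleGraph.Walk.not_nil_iff] at hqrevnil
    obtain ⟨y, hadj', q', hq'⟩ := hqrevnil
    have hya : y = x := hnbr hadj'
    subst hya
    have hmem : s(b, y) ∈ q.reverse.edges := by
      rw [hq', SimpleGraph.Walk.edges_cons]
      exact List.mem_cons_self
    rw [SimpleGraph.Walk.edges_reverse, List.mem_reverse] at hmem
    exact hc'.2 hmem

private lemma ceil_step (α d : ℕ) (hα : 5 ≤ α) (hd : α - 1 ≤ d) (k : ℤ)
    (hk : k ≤ max 2 ⌈(((d - 2 : ℕ) : ℚ) - α + 6) / 2⌉) :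
    k + 1 ≤ max 2 ⌈((d : ℚ) - α + 6) / 2⌉ := by
  have h2d : 2 ≤ d := by omega
  have hcast : ((d - 2 : ℕ) : ℚ) = (d : ℚ) - 2 := by
    rw [Nat.cast_sub h2d]; norm_num
  rw [hcast] at hk
  have hdq : (α : ℚ) ≤ (d : ℚ) + 1 := by exact_mod_cast (by omega : α ≤ d + 1)
  set x : ℚ := ((d : ℚ) - 2 - α + 6) / 2 with hx
  have hx32 : (3 : ℚ) / 2 ≤ x := by
    rw [hx, div_le_div_iff₀ (by norm_num) (by norm_num)]
    linarith
  have h2c : (2 : ℤ) ≤ ⌈x⌉ := by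
    have h1 := Int.le_ceil x
    have : (1 : ℚ) < (⌈x⌉ : ℚ) := by linarith
    exact_mod_cast this
  have hmx : max 2 ⌈x⌉ = ⌈x⌉ := max_eq_right h2c
  have hxy : ((d : ℚ) - α + 6) / 2 = x + 1 := by rw [hx]; ring
  rw [hxy, Int.ceil_add_one]
  rw [hmx] at hk
  exact le_trans (by omega) (le_max_right (2 : ℤ) (⌈x⌉ + 1))

/-- Let `α ≥ 5`, let `G` be a finite simple graph and let
`C = v₀v₁⋯v₂ₙ₋₁v₀` (`n ≥ 2`, given by `f i = vᵢ`) be a cycle of `G` whose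
even-indexed vertices have degree 2 in `G` and whose odd-indexed vertices have degree
at least `α - 1` in `G`.  If `G' = G - E(C)` has an edge partition into forests
`F₁'`, `F₂'` with `d_{Fᵢ'}(w) ≤ max {2, ⌈(d_{G'}(w) - α + 6)/2⌉}` for all `w`, and a
subgraph `H'` with `Δ(H') ≤ α - 5`, then `G` has such an edge partition; indeed one may
take `H = H'`, `F₁ = F₁'` plus the edges `v₁v₂, v₃v₄, …, v₂ₙ₋₁v₀`, and `F₂ = F₂'`
plus the edges `v₀v₁, v₂v₃, …, v₂ₙ₋₂v₂ₙ₋₁`. -/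
theorem statement7 {V : Type*} [Fintype V] (α : ℕ) (hα : 5 ≤ α)
    (G : SimpleGraph V) (n : ℕ) (hn : 2 ≤ n) (f : ℕ → V)
    (hinj : ∀ i < 2 * n, ∀ j < 2 * n, f i = f j → i = j)
    (hcyc : ∀ i < 2 * n, G.Adj (f i) (f ((i + 1) % (2 * n))))
    (heven : ∀ i < 2 * n, i % 2 = 0 → (G.neighborSet (f i)).ncard = 2)
    (hodd : ∀ i < 2 * n, i % 2 = 1 → α - 1 ≤ (G.neighborSet (f i)).ncard)
    (G' : SimpleGraph V)
    (hG' : G' = G.deleteEdges {e | ∃ i < 2 * n, e = s(f i, f ((i + 1) % (2 * n)))})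
    (F₁' F₂' H' : SimpleGraph V)
    (hpart' : EdgePartition3 G' F₁' F₂' H')
    (hF₁' : F₁'.IsAcyclic) (hF₂' : F₂'.IsAcyclic)
    (hd₁' : ∀ w, ((F₁'.neighborSet w).ncard : ℤ) ≤
      max 2 ⌈(((G'.neighborSet w).ncard : ℚ) - α + 6) / 2⌉)
    (hd₂' : ∀ w, ((F₂'.neighborSet w).ncard : ℤ) ≤
      max 2 ⌈(((G'.neighborSet w).ncard : ℚ) - α + 6) / 2⌉)
    (hH' : ∀ w, (H'.neighborSet w).ncard ≤ α - 5) :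
    ∃ F₁ F₂ : SimpleGraph V,
      F₁ = F₁' ⊔ SimpleGraph.fromEdgeSet
        {e | ∃ i < 2 * n, i % 2 = 1 ∧ e = s(f i, f ((i + 1) % (2 * n)))} ∧
      F₂ = F₂' ⊔ SimpleGraph.fromEdgeSet
        {e | ∃ i < 2 * n, i % 2 = 0 ∧ e = s(f i, f ((i + 1) % (2 * n)))} ∧
      EdgePartition3 G F₁ F₂ H' ∧
      F₁.IsAcyclic ∧ F₂.IsAcyclic ∧
      (∀ w, ((F₁.neighborSet w).ncard : ℤ) ≤
        max 2 ⌈(((G.neighborSet w).ncard : ℚ) - α + 6) / 2⌉) ∧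
      (∀ w, ((F₂.neighborSet w).ncard : ℤ) ≤
        max 2 ⌈(((G.neighborSet w).ncard : ℚ) - α + 6) / 2⌉) ∧
      (∀ w, (H'.neighborSet w).ncard ≤ α - 5) := by
  classical
  obtain ⟨hunion', hd12', hd1H', hd2H'⟩ := hpart'
  set m := 2 * n with hmdef
  have hm4 : 4 ≤ m := by omega
  have hm0 : 0 < m := by omega
  have hlt : ∀ i, i < m → (i + 1) % m < m := fun i _ => Nat.mod_lt _ hm0
  have hmod : ∀ i < m, (i + 1) % m = if i + 1 = m then 0 else i + 1 := by
    intro i hi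
    by_cases h : i + 1 = m
    · rw [if_pos h, h, Nat.mod_self]
    · rw [if_neg h, Nat.mod_eq_of_lt (by omega)]
  have hfeq : ∀ i < m, ∀ j < m, f i = f j → i = j := hinj
  have hsucc_inj : ∀ i < m, ∀ j < m, (i + 1) % m = (j + 1) % m → i = j := by
    intro i hi j hj h
    rw [hmod i hi, hmod j hj] at h
    split_ifs at h <;> omega
  have hsucc_par : ∀ i < m, ((i + 1) % m) % 2 = (i + 1) % 2 := by
    intro i hi
    rw [hmod i hi]
    split_ifs with h <;> omega
  -- predecessor
  set pr : ℕ → ℕ := fun i => if i = 0 then m - 1 else i - 1 with hprdef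
  have hpr_lt : ∀ i < m, pr i < m := by
    intro i hi; simp only [hprdef]; split_ifs <;> omega
  have hpr_succ : ∀ i < m, (pr i + 1) % m = i := by
    intro i hi; simp only [hprdef]; split_ifs with h
    · rw [(by omega : m - 1 + 1 = m), Nat.mod_self, h]
    · rw [(by omega : i - 1 + 1 = i)]; exact Nat.mod_eq_of_lt hi
  have hpr_ne_succ : ∀ i < m, pr i ≠ (i + 1) % m := by
    intro i hi h
    have h1 : ((i + 1) % m + 1) % m = i := by rw [← h]; exact hpr_succ i hi
    rw [hmod i hi] at h1
    split_ifs at h1 with h2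
    · have h3 : (0 + 1) % m = 0 + 1 := Nat.mod_eq_of_lt (by omega)
      omega
    · rw [hmod (i + 1) (by omega)] at h1
      split_ifs at h1 <;> omega
  have hGadj_pr : ∀ i < m, G.Adj (f i) (f (pr i)) := by
    intro i hi
    have h := hcyc (pr i) (hpr_lt i hi)
    rw [hpr_succ i hi] at h
    exact h.symm
  -- edge sets
  set EC : Set (Sym2 V) := {e | ∃ i < m, e = s(f i, f ((i + 1) % m))} with hECdef
  set E1 : Set (Sym2 V) := {e | ∃ i < m, i % 2 = 1 ∧ e = s(f i, f ((i + 1) % m))} with hE1def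
  set E2 : Set (Sym2 V) := {e | ∃ i < m, i % 2 = 0 ∧ e = s(f i, f ((i + 1) % m))} with hE2def
  have hECsub : EC ⊆ G.edgeSet := by
    rintro e ⟨i, hi, rfl⟩
    exact G.mem_edgeSet.mpr (hcyc i hi)
  have hG'E : G'.edgeSet = G.edgeSet \ EC := by rw [hG']; exact G.edgeSet_deleteEdges EC
  have hG'adj : ∀ a b : V, G'.Adj a b ↔ G.Adj a b ∧ s(a, b) ∉ EC := by
    intro a b; rw [hG']; exact SimpleGraph.deleteEdges_adj
  have hMemEC : ∀ i < m, s(f i, f ((i + 1) % m)) ∈ EC := fun i hi => ⟨i, hi, rfl⟩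
  have hMemEC_pr : ∀ i < m, s(f i, f (pr i)) ∈ EC := by
    intro i hi
    refine ⟨pr i, hpr_lt i hi, ?_⟩
    rw [hpr_succ i hi, Sym2.eq_swap]
  have hE1sub : E1 ⊆ EC := by rintro e ⟨i, hi, _, rfl⟩; exact ⟨i, hi, rfl⟩
  have hE2sub : E2 ⊆ EC := by rintro e ⟨i, hi, _, rfl⟩; exact ⟨i, hi, rfl⟩
  have hECeq : E1 ∪ E2 = EC := by
    apply Set.Subset.antisymm (Set.union_subset hE1sub hE2sub)
    rintro e ⟨i, hi, rfl⟩
    rcases Nat.mod_two_eq_zero_or_one i with h | h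
    · exact Set.mem_union_right _ ⟨i, hi, h, rfl⟩
    · exact Set.mem_union_left _ ⟨i, hi, h, rfl⟩
  have hedge_inj : ∀ i < m, ∀ j < m,
      s(f i, f ((i + 1) % m)) = s(f j, f ((j + 1) % m)) → i = j := by
    intro i hi j hj h
    rw [Sym2.eq_iff] at h
    rcases h with ⟨h1, _⟩ | ⟨h1, h2⟩
    · exact hfeq i hi j hj h1
    · exfalso
      have e1 : i = (j + 1) % m := hfeq i hi _ (hlt j hj) h1
      have e2 : (i + 1) % m = j := hfeq _ (hlt i hi) j hj h2
      rw [hmod j hj] at e1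
      rw [hmod i hi] at e2
      split_ifs at e1 <;> split_ifs at e2 <;> omega
  have hE12 : Disjoint E1 E2 := by
    rw [Set.disjoint_left]
    rintro e ⟨i, hi, hip, rfl⟩ ⟨j, hj, hjp, hej⟩
    have := hedge_inj i hi j hj hej
    omega
  have hG'EC : Disjoint G'.edgeSet EC := by rw [hG'E]; exact Set.disjoint_sdiff_left
  have hF1'sub : F₁'.edgeSet ⊆ G'.edgeSet := by
    rw [← hunion']; exact fun e he => Or.inl (Or.inl he)
  have hF2'sub : F₂'.edgeSet ⊆ G'.edgeSet := by
    rw [← hunion']; exact fun e he => Or.inl (Or.inr he)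
  have hH'sub : H'.edgeSet ⊆ G'.edgeSet := by
    rw [← hunion']; exact fun e he => Or.inr he
  have hM1E : (SimpleGraph.fromEdgeSet E1).edgeSet = E1 := by
    rw [SimpleGraph.edgeSet_fromEdgeSet]
    apply Set.Subset.antisymm Set.diff_subset
    rintro e ⟨i, hi, hip, rfl⟩
    refine ⟨⟨i, hi, hip, rfl⟩, ?_⟩
    simp only [Set.mem_setOf_eq, Sym2.mem_diagSet, Sym2.mk_isDiag_iff]
    exact (hcyc i hi).ne
  have hM2E : (SimpleGraph.fromEdgeSet E2).edgeSet = E2 := by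
    rw [SimpleGraph.edgeSet_fromEdgeSet]
    apply Set.Subset.antisymm Set.diff_subset
    rintro e ⟨i, hi, hip, rfl⟩
    refine ⟨⟨i, hi, hip, rfl⟩, ?_⟩
    simp only [Set.mem_setOf_eq, Sym2.mem_diagSet, Sym2.mk_isDiag_iff]
    exact (hcyc i hi).ne
  -- matching neighbor sets are subsingletons
  have hMsub : ∀ r < 2, ∀ E : Set (Sym2 V),
      E = {e | ∃ i < m, i % 2 = r ∧ e = s(f i, f ((i + 1) % m))} →
      ∀ w, ((SimpleGraph.fromEdgeSet E).neighborSet w).Subsingleton := by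
    rintro r hr E rfl w x hx y hy
    rw [SimpleGraph.mem_neighborSet, SimpleGraph.fromEdgeSet_adj] at hx hy
    obtain ⟨⟨i, hi, hip, hei⟩, hwx⟩ := hx
    obtain ⟨⟨j, hj, hjp, hej⟩, hwy⟩ := hy
    rw [Sym2.eq_iff] at hei hej
    have hps_i := hsucc_par i hi
    have hps_j := hsucc_par j hj
    rcases hei with ⟨hw1, hx1⟩ | ⟨hw1, hx1⟩ <;> rcases hej with ⟨hw2, hy2⟩ | ⟨hw2, hy2⟩
    · have hij : i = j := hfeq i hi j hj (hw1.symm.trans hw2)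
      rw [hx1, hy2, hij]
    · exfalso
      have hij : i = (j + 1) % m := hfeq i hi _ (hlt j hj) (hw1.symm.trans hw2)
      rw [hij, hps_j] at hip
      omega
    · exfalso
      have hij : (i + 1) % m = j := hfeq _ (hlt i hi) j hj (hw1.symm.trans hw2)
      rw [← hij, hps_i] at hjp
      omega
    · have hij : (i + 1) % m = (j + 1) % m := hfeq _ (hlt i hi) _ (hlt j hj) (hw1.symm.trans hw2)
      have := hsucc_inj i hi j hj hij
      rw [hx1, hy2, this]
  -- G neighbor sets at even cycle vertices
  have hnbrG_even : ∀ i < m, i % 2 = 0 →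
      G.neighborSet (f i) = {f (pr i), f ((i + 1) % m)} := by
    intro i hi hp
    have h1 : f (pr i) ∈ G.neighborSet (f i) := hGadj_pr i hi
    have h2 : f ((i + 1) % m) ∈ G.neighborSet (f i) := hcyc i hi
    have hne12 : f (pr i) ≠ f ((i + 1) % m) := by
      intro h
      exact hpr_ne_succ i hi (hfeq _ (hpr_lt i hi) _ (hlt i hi) h)
    refine (Set.eq_of_subset_of_ncard_le ?_ ?_ (Set.toFinite _)).symm
    · intro x hx
      simp only [Set.mem_insert_iff, Set.mem_singleton_iff] at hx
      rcases hx with rfl | rfl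
      exacts [h1, h2]
    · rw [heven i hi hp, Set.ncard_pair hne12]
  have hG'nbr_even : ∀ i < m, i % 2 = 0 → G'.neighborSet (f i) = ∅ := by
    intro i hi hp
    ext x
    simp only [SimpleGraph.mem_neighborSet, Set.mem_empty_iff_false, iff_false]
    intro hx
    rw [hG'adj] at hx
    obtain ⟨hxG, hxE⟩ := hx
    have hx' : x ∈ G.neighborSet (f i) := hxG
    rw [hnbrG_even i hi hp] at hx'
    simp only [Set.mem_insert_iff, Set.mem_singleton_iff] at hx'
    rcases hx' with rfl | rfl
    · exact hxE (hMemEC_pr i hi)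
    · exact hxE (hMemEC i hi)
  have hG'nbr_odd : ∀ i < m, i % 2 = 1 →
      G'.neighborSet (f i) = G.neighborSet (f i) \ {f (pr i), f ((i + 1) % m)} := by
    intro i hi hp
    ext x
    simp only [SimpleGraph.mem_neighborSet, Set.mem_diff, Set.mem_insert_iff,
      Set.mem_singleton_iff]
    rw [hG'adj]
    constructor
    · rintro ⟨hxG, hxE⟩
      refine ⟨hxG, ?_⟩
      push_neg
      constructor
      · rintro rfl; exact hxE (hMemEC_pr i hi)
      · rintro rfl; exact hxE (hMemEC i hi)
    · rintro ⟨hxG, hx2⟩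
      push_neg at hx2
      refine ⟨hxG, ?_⟩
      rintro ⟨j, hj, hej⟩
      rw [Sym2.eq_iff] at hej
      rcases hej with ⟨h1, h2⟩ | ⟨h1, h2⟩
      · exact hx2.2 (by rw [h2, hfeq i hi j hj h1])
      · have hji : i = (j + 1) % m := hfeq i hi _ (hlt j hj) h1
        have hj' : j = pr i := by
          apply hsucc_inj j hj (pr i) (hpr_lt i hi)
          rw [hpr_succ i hi, ← hji]
        exact hx2.1 (by rw [h2, hj'])
  have hG'nbr_off : ∀ w : V, (∀ i < m, w ≠ f i) → G'.neighborSet w = G.neighborSet w := by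
    intro w hw
    ext x
    simp only [SimpleGraph.mem_neighborSet]
    rw [hG'adj]
    constructor
    · exact fun h => h.1
    · intro hxG
      refine ⟨hxG, ?_⟩
      rintro ⟨j, hj, hej⟩
      rw [Sym2.eq_iff] at hej
      rcases hej with ⟨h1, _⟩ | ⟨h1, _⟩
      · exact hw j hj h1
      · exact hw _ (hlt j hj) h1
  have hM_off : ∀ w : V, (∀ i < m, w ≠ f i) → ∀ E : Set (Sym2 V), E ⊆ EC →
      (SimpleGraph.fromEdgeSet E).neighborSet w = ∅ := by
    intro w hw E hE
    ext x
    simp only [SimpleGraph.mem_neighborSet, SimpleGraph.fromEdgeSet_adj,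
      Set.mem_empty_iff_false, iff_false]
    rintro ⟨hmem, -⟩
    obtain ⟨j, hj, hej⟩ := hE hmem
    rw [Sym2.eq_iff] at hej
    rcases hej with ⟨h1, _⟩ | ⟨h1, _⟩
    · exact hw j hj h1
    · exact hw _ (hlt j hj) h1
  have hnbr_mono : ∀ A B : SimpleGraph V, A.edgeSet ⊆ B.edgeSet →
      ∀ w, A.neighborSet w ⊆ B.neighborSet w := by
    intro A B h w x hx
    rw [SimpleGraph.mem_neighborSet] at hx ⊢
    exact B.mem_edgeSet.mp (h (A.mem_edgeSet.mpr hx))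
  have hF'nbr_even : ∀ F : SimpleGraph V, F.edgeSet ⊆ G'.edgeSet →
      ∀ i < m, i % 2 = 0 → F.neighborSet (f i) = ∅ := by
    intro F hF i hi hp
    refine Set.eq_empty_iff_forall_notMem.mpr fun x hx => ?_
    have : x ∈ G'.neighborSet (f i) := hnbr_mono F G' hF (f i) hx
    rw [hG'nbr_even i hi hp] at this
    exact this
  -- generalized acyclicity
  have hacyc : ∀ (F : SimpleGraph V), F.edgeSet ⊆ G'.edgeSet → F.IsAcyclic →
      ∀ r < 2, ∀ E : Set (Sym2 V),
      E = {e | ∃ i < m, i % 2 = r ∧ e = s(f i, f ((i + 1) % m))} →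
      (F ⊔ SimpleGraph.fromEdgeSet E).IsAcyclic := by
    intro F hFsub hFac r hr E hE
    apply acyclic_sup_pendant hFac
    intro e he
    rw [SimpleGraph.edgeSet_fromEdgeSet, hE] at he
    obtain ⟨⟨i, hi, hip, rfl⟩, -⟩ := he
    have hiE : s(f i, f ((i + 1) % m)) ∈ E := by rw [hE]; exact ⟨i, hi, hip, rfl⟩
    have hne : f i ≠ f ((i + 1) % m) := (hcyc i hi).ne
    have hsp := hsucc_par i hi
    rcases (by omega : r = 0 ∨ r = 1) with rfl | rfl
    · -- even i : pendant endpoint is f i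
      refine ⟨f ((i + 1) % m), f i, Sym2.eq_swap, ?_⟩
      intro x hx
      rw [nbrSet_sup] at hx
      rcases hx with hx | hx
      · rw [hF'nbr_even F hFsub i hi hip] at hx
        exact absurd hx (Set.notMem_empty x)
      · have hmem : f ((i + 1) % m) ∈ (SimpleGraph.fromEdgeSet E).neighborSet (f i) := by
          rw [SimpleGraph.mem_neighborSet, SimpleGraph.fromEdgeSet_adj]
          exact ⟨hiE, hne⟩
        exact (hMsub 0 (by omega) E hE (f i) hx hmem)
    · -- odd i : pendant endpoint is f ((i+1) % m), which has even index
      refine ⟨f i, f ((i + 1) % m), rfl, ?_⟩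
      intro x hx
      rw [nbrSet_sup] at hx
      rcases hx with hx | hx
      · rw [hF'nbr_even F hFsub ((i + 1) % m) (hlt i hi) (by omega)] at hx
        exact absurd hx (Set.notMem_empty x)
      · have hmem : f i ∈ (SimpleGraph.fromEdgeSet E).neighborSet (f ((i + 1) % m)) := by
          rw [SimpleGraph.mem_neighborSet, SimpleGraph.fromEdgeSet_adj]
          refine ⟨?_, hne.symm⟩
          rw [Sym2.eq_swap]
          exact hiE
        exact (hMsub 1 (by omega) E hE (f ((i + 1) % m)) hx hmem)
  -- generalized degree bound
  have hdeg : ∀ (F : SimpleGraph V), F.edgeSet ⊆ G'.edgeSet →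
      (∀ w, ((F.neighborSet w).ncard : ℤ) ≤
        max 2 ⌈(((G'.neighborSet w).ncard : ℚ) - α + 6) / 2⌉) →
      ∀ r < 2, ∀ E : Set (Sym2 V),
      E = {e | ∃ i < m, i % 2 = r ∧ e = s(f i, f ((i + 1) % m))} →
      ∀ w, (((F ⊔ SimpleGraph.fromEdgeSet E).neighborSet w).ncard : ℤ) ≤
        max 2 ⌈(((G.neighborSet w).ncard : ℚ) - α + 6) / 2⌉ := by
    intro F hFsub hFd r hr E hE w
    have hEsub : E ⊆ EC := by
      rw [hE]; rintro e ⟨i, hi, _, rfl⟩; exact ⟨i, hi, rfl⟩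
    have hMcard : ∀ v : V, ((SimpleGraph.fromEdgeSet E).neighborSet v).ncard ≤ 1 := by
      intro v
      rcases (hMsub r hr E hE v).eq_empty_or_singleton with h | ⟨x, h⟩
      · rw [h]; simp
      · rw [h]; simp
    by_cases hw : ∃ i < m, w = f i
    · obtain ⟨i, hi, rfl⟩ := hw
      rcases Nat.mod_two_eq_zero_or_one i with hp | hp
      · -- even vertex
        rw [nbrSet_sup, hF'nbr_even F hFsub i hi hp, Set.empty_union]
        have h2 := hMcard (f i)
        have : (((SimpleGraph.fromEdgeSet E).neighborSet (f i)).ncard : ℤ) ≤ 2 := by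
          exact_mod_cast le_trans h2 one_le_two
        exact le_trans this (le_max_left _ _)
      · -- odd vertex
        have hd := hFd (f i)
        rw [hG'nbr_odd i hi hp] at hd
        have hsubpair : ({f (pr i), f ((i + 1) % m)} : Set V) ⊆ G.neighborSet (f i) := by
          intro x hx
          simp only [Set.mem_insert_iff, Set.mem_singleton_iff] at hx
          rcases hx with rfl | rfl
          exacts [hGadj_pr i hi, hcyc i hi]
        have hnepair : f (pr i) ≠ f ((i + 1) % m) := by
          intro h
          exact hpr_ne_succ i hi (hfeq _ (hpr_lt i hi) _ (hlt i hi) h)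
        have hdiff : (G.neighborSet (f i) \ ({f (pr i), f ((i + 1) % m)} : Set V)).ncard
            = (G.neighborSet (f i)).ncard - 2 := by
          rw [Set.ncard_diff hsubpair (Set.toFinite _), Set.ncard_pair hnepair]
        rw [hdiff] at hd
        have hcard : α - 1 ≤ (G.neighborSet (f i)).ncard := hodd i hi hp
        have hstep := ceil_step α (G.neighborSet (f i)).ncard hα hcard _ hd
        refine le_trans ?_ hstep
        have hun : ((F ⊔ SimpleGraph.fromEdgeSet E).neighborSet (f i)).ncard
            ≤ (F.neighborSet (f i)).ncard + 1 := by
          rw [nbrSet_sup]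
          exact le_trans (Set.ncard_union_le _ _) (by have := hMcard (f i); omega)
        exact_mod_cast hun
    · push_neg at hw
      rw [nbrSet_sup, hM_off w hw E hEsub, Set.union_empty]
      have hd := hFd w
      rw [hG'nbr_off w hw] at hd
      exact hd
  -- assemble
  refine ⟨F₁' ⊔ SimpleGraph.fromEdgeSet E1, F₂' ⊔ SimpleGraph.fromEdgeSet E2, rfl, rfl,
    ⟨?_, ?_, ?_, ?_⟩, hacyc F₁' hF1'sub hF₁' 1 (by omega) E1 hE1def,
    hacyc F₂' hF2'sub hF₂' 0 (by omega) E2 hE2def,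
    hdeg F₁' hF1'sub hd₁' 1 (by omega) E1 hE1def,
    hdeg F₂' hF2'sub hd₂' 0 (by omega) E2 hE2def, hH'⟩
  · rw [SimpleGraph.edgeSet_sup, SimpleGraph.edgeSet_sup, hM1E, hM2E]
    have hre : F₁'.edgeSet ∪ E1 ∪ (F₂'.edgeSet ∪ E2) ∪ H'.edgeSet
        = (F₁'.edgeSet ∪ F₂'.edgeSet ∪ H'.edgeSet) ∪ (E1 ∪ E2) := by
      ext e; simp only [Set.mem_union]; tauto
    rw [hre, hunion', hECeq, hG'E, Set.diff_union_of_subset hECsub]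
  · rw [SimpleGraph.edgeSet_sup, SimpleGraph.edgeSet_sup, hM1E, hM2E]
    exact Set.disjoint_union_left.mpr
      ⟨Set.disjoint_union_right.mpr ⟨hd12', hG'EC.mono hF1'sub hE2sub⟩,
       Set.disjoint_union_right.mpr ⟨(hG'EC.mono hF2'sub hE1sub).symm, hE12⟩⟩
  · rw [SimpleGraph.edgeSet_sup, hM1E]
    exact Set.disjoint_union_left.mpr ⟨hd1H', (hG'EC.mono hH'sub hE1sub).symm⟩
  · rw [SimpleGraph.edgeSet_sup, hM2E]
    exact Set.disjoint_union_left.mpr ⟨hd2H', (hG'EC.mono hH'sub hE2sub).symm⟩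
end
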